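/- arXiv:2502.13275 — 6 statements merged into one kernel-verified Lean document; each statement's English description precedes it below -/
import Mathlib

section
/- There exists a constant C = C(d, l, c, M) > 0 such that for every δ > 0 and all points ξ₁, ξ₂, ξ₃, ξ₄ ∈ B_d(0,1) satisfying ξ₁ + ξ₃ = ξ₂ + ξ₄ and |q_m(ξ₁) + q_m(ξ₃) − q_m(ξ₂) − q_m(ξ₄)| ≤ δ for every m = 1, …, l, one has ‖ξ₁ − ξ₂‖ · ‖ξ₁ − ξ₄‖ ≤ C δ. In particular min(‖ξ₁ − ξ₂‖, ‖ξ₁ − ξ₄‖) ≤ C^{1/2} δ^{1/2}. -/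
lemma abs_det_le' {d : ℕ} (N : Matrix (Fin d) (Fin d) ℝ) (K : ℝ)
    (h : ∀ i j, |N i j| ≤ K) : |N.det| ≤ d.factorial * K ^ d := by
  rw [Matrix.det_apply]
  calc |∑ σ : Equiv.Perm (Fin d), Equiv.Perm.sign σ • ∏ i, N (σ i) i|
      ≤ ∑ σ : Equiv.Perm (Fin d), |Equiv.Perm.sign σ • ∏ i, N (σ i) i| :=
        Finset.abs_sum_le_sum_abs _ _
    _ ≤ ∑ _σ : Equiv.Perm (Fin d), K ^ d := by
        refine Finset.sum_le_sum fun σ _ => ?_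
        have h1 : |Equiv.Perm.sign σ • ∏ i, N (σ i) i| = |∏ i, N (σ i) i| := by
          rcases Int.units_eq_one_or (Equiv.Perm.sign σ) with h'|h' <;> simp [h']
        rw [h1, Finset.abs_prod]
        calc ∏ i, |N (σ i) i| ≤ ∏ _i : Fin d, K :=
              Finset.prod_le_prod (fun i _ => abs_nonneg _) (fun i _ => h (σ i) i)
          _ = K ^ d := by simp
    _ = d.factorial * K ^ d := by
        simp [Finset.sum_const, Finset.card_univ, Fintype.card_perm]

lemma core_bound {d : ℕ} (W : Matrix (Fin d) (Fin d) ℝ) (c K ε : ℝ)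
    (hc : 0 < c) (hK : 1 ≤ K) (hε : 0 ≤ ε)
    (hdet : c ≤ |W.det|) (hent : ∀ i j, |W i j| ≤ K)
    (v : Fin d → ℝ) (hv : ∀ j, |Matrix.mulVec W.transpose v j| ≤ ε) :
    ∀ i, |v i| ≤ d * (d.factorial * K ^ d / c) * ε := by
  have hdet0 : W.det ≠ 0 := by
    intro h
    rw [h, abs_zero] at hdet
    linarith
  have hU : IsUnit W.transpose.det := by
    rw [Matrix.det_transpose]; exact isUnit_iff_ne_zero.2 hdet0
  have hvv : v = W.transpose⁻¹.mulVec (W.transpose.mulVec v) := by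
    rw [Matrix.mulVec_mulVec, Matrix.nonsing_inv_mul _ hU, Matrix.one_mulVec]
  have hinv : ∀ i j, |W.transpose⁻¹ i j| ≤ d.factorial * K ^ d / c := by
    intro i j
    have hadj : |W.transpose.adjugate i j| ≤ d.factorial * K ^ d := by
      rw [Matrix.adjugate_apply]
      refine abs_det_le' _ K fun i' j' => ?_
      rw [Matrix.updateRow_apply]
      split
      · rcases eq_or_ne j' i with h|h <;> simp [Pi.single_apply, h] <;> linarith
      · exact hent j' i'
    have : W.transpose⁻¹ i j = (W.transpose.det)⁻¹ * W.transpose.adjugate i j := by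
      rw [Matrix.inv_def, Ring.inverse_eq_inv']
      simp [Matrix.smul_apply, smul_eq_mul]
    rw [this, abs_mul, abs_inv, Matrix.det_transpose]
    rw [div_eq_mul_inv, mul_comm]
    exact mul_le_mul hadj (inv_anti₀ hc hdet) (by positivity) (by positivity)
  intro i
  have : v i = ∑ j, W.transpose⁻¹ i j * (W.transpose.mulVec v) j := by
    conv_lhs => rw [hvv]
    rfl
  rw [this]
  calc |∑ j, W.transpose⁻¹ i j * (W.transpose.mulVec v) j|
      ≤ ∑ j, |W.transpose⁻¹ i j * (W.transpose.mulVec v) j| := Finset.abs_sum_le_sum_abs _ _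
    _ ≤ ∑ _j : Fin d, (d.factorial * K ^ d / c) * ε := by
        refine Finset.sum_le_sum fun j _ => ?_
        rw [abs_mul]
        exact mul_le_mul (hinv i j) (hv j) (abs_nonneg _) (by positivity)
    _ = d * (d.factorial * K ^ d / c) * ε := by
        rw [Finset.sum_const, Finset.card_univ, Fintype.card_fin, nsmul_eq_mul]
        ring

lemma quad_identity {d : ℕ} (A : Matrix (Fin d) (Fin d) ℝ) (b : Fin d → ℝ) (c0 : ℝ)
    (x₁ x₂ x₄ : Fin d → ℝ) :
    ((1/2) * dotProduct x₁ (A.mulVec x₁) + dotProduct b x₁ + c0)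
    + ((1/2) * dotProduct (x₂ + x₄ - x₁) (A.mulVec (x₂ + x₄ - x₁))
        + dotProduct b (x₂ + x₄ - x₁) + c0)
    - ((1/2) * dotProduct x₂ (A.mulVec x₂) + dotProduct b x₂ + c0)
    - ((1/2) * dotProduct x₄ (A.mulVec x₄) + dotProduct b x₄ + c0)
    = (1/2) * (dotProduct (x₁ - x₂) (A.mulVec (x₁ - x₄))
        + dotProduct (x₁ - x₄) (A.mulVec (x₁ - x₂))) := by
  simp only [Matrix.mulVec_add, Matrix.mulVec_sub, dotProduct_add,
    dotProduct_sub, add_dotProduct, sub_dotProduct]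
  ring

lemma dot_symm {d : ℕ} {A : Matrix (Fin d) (Fin d) ℝ} (hA : A.IsSymm)
    (x y : Fin d → ℝ) : dotProduct x (A.mulVec y) = dotProduct y (A.mulVec x) := by
  rw [Matrix.dotProduct_mulVec, ← Matrix.mulVec_transpose, hA.eq, dotProduct_comm]

lemma coord_le_norm {d : ℕ} (x : EuclideanSpace ℝ (Fin d)) (i : Fin d) : |x i| ≤ ‖x‖ := by
  rw [EuclideanSpace.norm_eq, ← Real.sqrt_sq_eq_abs]
  refine Real.sqrt_le_sqrt ?_
  have := Finset.single_le_sum (f := fun j => ‖x j‖ ^ 2) (fun j _ => sq_nonneg _)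
    (Finset.mem_univ i)
  simpa [sq_abs] using this

lemma norm_le_of_coords {d : ℕ} (x : EuclideanSpace ℝ (Fin d)) (B : ℝ) (hB : 0 ≤ B)
    (h : ∀ i, |x i| ≤ B) : ‖x‖ ≤ Real.sqrt d * B := by
  rw [EuclideanSpace.norm_eq]
  have hsum : ∑ i, ‖x i‖ ^ 2 ≤ d * B ^ 2 := by
    calc ∑ i, ‖x i‖ ^ 2 ≤ ∑ _i : Fin d, B ^ 2 := by
          refine Finset.sum_le_sum fun i _ => ?_
          have := h i
          rw [Real.norm_eq_abs]
          nlinarith [abs_nonneg (x i)]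
      _ = d * B ^ 2 := by
          rw [Finset.sum_const, Finset.card_univ, Fintype.card_fin, nsmul_eq_mul]
  calc Real.sqrt (∑ i, ‖x i‖ ^ 2) ≤ Real.sqrt (d * B ^ 2) := Real.sqrt_le_sqrt hsum
    _ = Real.sqrt d * B := by
        rw [Real.sqrt_mul (by positivity), Real.sqrt_sq hB]

/-- **Biorthogonality for quadratic manifolds.** Under the transversality condition for
the symmetric generators `A₁, …, A_l` (operator norms at most `M`), there is
`C = C(d, l, c, M) > 0` such that for all `δ > 0` and `ξ₁, ξ₂, ξ₃, ξ₄ ∈ B_d(0,1)` with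
`ξ₁ + ξ₃ = ξ₂ + ξ₄` and `|q_m(ξ₁) + q_m(ξ₃) − q_m(ξ₂) − q_m(ξ₄)| ≤ δ` for all `m`,
one has `‖ξ₁ − ξ₂‖·‖ξ₁ − ξ₄‖ ≤ Cδ`; in particular
`min(‖ξ₁ − ξ₂‖, ‖ξ₁ − ξ₄‖) ≤ C^{1/2} δ^{1/2}`. -/
theorem biorthogonality_quadratic_manifold
    (d l : ℕ) (hd : 1 ≤ d) (hl : 1 ≤ l)
    (A : Fin l → Matrix (Fin d) (Fin d) ℝ) (hsymm : ∀ m, (A m).IsSymm)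
    (b : Fin l → EuclideanSpace ℝ (Fin d)) (c0 : Fin l → ℝ)
    (M c : ℝ) (hc : 0 < c)
    (hM : ∀ (m : Fin l) (v : EuclideanSpace ℝ (Fin d)),
      ‖(show EuclideanSpace ℝ (Fin d) from WithLp.toLp 2 ((A m).mulVec v))‖ ≤ M * ‖v‖)
    (htrans : ∀ ν : EuclideanSpace ℝ (Fin d), ‖ν‖ = 1 →
      ∃ idx : Fin d → Fin l,
        c ≤ |Matrix.det (Matrix.of fun i j => ((A (idx j)).mulVec ν) i)|)
    (q : Fin l → EuclideanSpace ℝ (Fin d) → ℝ)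
    (hq : ∀ (m : Fin l) (ξ : EuclideanSpace ℝ (Fin d)),
      q m ξ = (1/2) * dotProduct (ξ : Fin d → ℝ) ((A m).mulVec ξ)
        + dotProduct (b m : Fin d → ℝ) ξ + c0 m) :
    ∃ C : ℝ, 0 < C ∧ ∀ δ : ℝ, 0 < δ →
      ∀ ξ₁ ξ₂ ξ₃ ξ₄ : EuclideanSpace ℝ (Fin d),
        ‖ξ₁‖ < 1 → ‖ξ₂‖ < 1 → ‖ξ₃‖ < 1 → ‖ξ₄‖ < 1 →
        ξ₁ + ξ₃ = ξ₂ + ξ₄ →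
        (∀ m : Fin l, |q m ξ₁ + q m ξ₃ - q m ξ₂ - q m ξ₄| ≤ δ) →
        ‖ξ₁ - ξ₂‖ * ‖ξ₁ - ξ₄‖ ≤ C * δ ∧
        min ‖ξ₁ - ξ₂‖ ‖ξ₁ - ξ₄‖ ≤ Real.sqrt C * Real.sqrt δ := by
  set K := max M 1 with hKdef
  have hK1 : (1:ℝ) ≤ K := le_max_right _ _
  have hK0 : (0:ℝ) < K := lt_of_lt_of_le one_pos hK1
  have hd0 : (0:ℝ) < d := by exact_mod_cast hd
  refine ⟨(d:ℝ)^2 * d.factorial * K ^ d / c, by positivity, ?_⟩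
  intro δ hδ ξ₁ ξ₂ ξ₃ ξ₄ h1 h2 h3 h4 hsum hδm
  have hkey : ∀ m, |dotProduct ((ξ₁ : Fin d → ℝ) - (ξ₂ : Fin d → ℝ))
      ((A m).mulVec ((ξ₁ : Fin d → ℝ) - (ξ₄ : Fin d → ℝ)))| ≤ δ := by
    intro m
    have hid := quad_identity (A m) ((b m : Fin d → ℝ)) (c0 m)
      (ξ₁ : Fin d → ℝ) (ξ₂ : Fin d → ℝ) (ξ₄ : Fin d → ℝ)
    have hsym := dot_symm (hsymm m) ((ξ₁ : Fin d → ℝ) - (ξ₂ : Fin d → ℝ))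
      ((ξ₁ : Fin d → ℝ) - (ξ₄ : Fin d → ℝ))
    have h := hδm m
    rw [hq, hq, hq, hq] at h
    have e3 : (ξ₃ : Fin d → ℝ) = (ξ₂ : Fin d → ℝ) + (ξ₄ : Fin d → ℝ) - (ξ₁ : Fin d → ℝ) := by
      have h3e : ξ₃ = ξ₂ + ξ₄ - ξ₁ := by rw [eq_sub_iff_add_eq, add_comm]; exact hsum
      rw [h3e]; rfl
    rw [e3] at h
    rw [hid] at h
    have hDv : dotProduct ((ξ₁ : Fin d → ℝ) - (ξ₂ : Fin d → ℝ))
        ((A m).mulVec ((ξ₁ : Fin d → ℝ) - (ξ₄ : Fin d → ℝ)))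
        = (1/2) * (dotProduct ((ξ₁ : Fin d → ℝ) - (ξ₂ : Fin d → ℝ))
            ((A m).mulVec ((ξ₁ : Fin d → ℝ) - (ξ₄ : Fin d → ℝ)))
          + dotProduct ((ξ₁ : Fin d → ℝ) - (ξ₄ : Fin d → ℝ))
            ((A m).mulVec ((ξ₁ : Fin d → ℝ) - (ξ₂ : Fin d → ℝ)))) := by
      rw [hsym]; ring
    rw [hDv]
    exact h
  have hC0 : (0:ℝ) < (d:ℝ)^2 * d.factorial * K ^ d / c := by positivity
  have hmain : ‖ξ₁ - ξ₂‖ * ‖ξ₁ - ξ₄‖ ≤ (d:ℝ)^2 * d.factorial * K ^ d / c * δ := by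
    by_cases hu0 : ξ₁ - ξ₂ = 0
    · rw [hu0, norm_zero, zero_mul]; positivity
    · have hr : 0 < ‖ξ₁ - ξ₂‖ := norm_pos_iff.mpr hu0
      set r := ‖ξ₁ - ξ₂‖ with hrdef
      set ν : EuclideanSpace ℝ (Fin d) := r⁻¹ • (ξ₁ - ξ₂) with hνdef
      have hν : ‖ν‖ = 1 := norm_smul_inv_norm hu0
      obtain ⟨idx, hdet⟩ := htrans ν hν
      set W : Matrix (Fin d) (Fin d) ℝ :=
        Matrix.of fun i j => ((A (idx j)).mulVec ν) i with hWdef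
      have hent : ∀ i j, |W i j| ≤ K := by
        intro i j
        have h1 : |((A (idx j)).mulVec ν) i|
            ≤ ‖(show EuclideanSpace ℝ (Fin d) from WithLp.toLp 2 ((A (idx j)).mulVec ν))‖ :=
          coord_le_norm (WithLp.toLp 2 ((A (idx j)).mulVec ν)) i
        have h2 := hM (idx j) ν
        rw [hν, mul_one] at h2
        calc |W i j| = |((A (idx j)).mulVec ν) i| := rfl
          _ ≤ M := le_trans h1 h2
          _ ≤ K := le_max_left _ _
      have hδr : 0 ≤ δ / r := by positivity
      have hWv : ∀ j, |W.transpose.mulVec ((ξ₁ : Fin d → ℝ) - (ξ₄ : Fin d → ℝ)) j| ≤ δ / r := by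
        intro j
        have e1 : W.transpose.mulVec ((ξ₁ : Fin d → ℝ) - (ξ₄ : Fin d → ℝ)) j
            = dotProduct ((A (idx j)).mulVec ν)
                ((ξ₁ : Fin d → ℝ) - (ξ₄ : Fin d → ℝ)) := rfl
        have e2 : dotProduct ((A (idx j)).mulVec ν)
              ((ξ₁ : Fin d → ℝ) - (ξ₄ : Fin d → ℝ))
            = dotProduct (ν : Fin d → ℝ)
                ((A (idx j)).mulVec ((ξ₁ : Fin d → ℝ) - (ξ₄ : Fin d → ℝ))) := by
          rw [dotProduct_comm]
          exact dot_symm (hsymm (idx j)) _ _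
        have e4 : (ν : Fin d → ℝ) = r⁻¹ • ((ξ₁ : Fin d → ℝ) - (ξ₂ : Fin d → ℝ)) := rfl
        rw [e1, e2, e4, smul_dotProduct, smul_eq_mul, abs_mul, abs_inv,
          abs_of_pos hr, div_eq_inv_mul]
        exact mul_le_mul_of_nonneg_left (hkey (idx j)) (by positivity)
      have hcoord := core_bound W c K (δ/r) hc hK1 hδr hdet hent _ hWv
      set B := (d:ℝ) * ((d.factorial : ℝ) * K ^ d / c) * (δ / r) with hBdef
      have hB : 0 ≤ B := by positivity
      have hnv : ‖ξ₁ - ξ₄‖ ≤ Real.sqrt d * B := by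
        refine norm_le_of_coords _ B hB fun i => ?_
        exact hcoord i
      have hsqd : Real.sqrt d ≤ (d:ℝ) := by
        have h1d : (1:ℝ) ≤ d := by exact_mod_cast hd
        have h2 := Real.sqrt_le_sqrt (show (d:ℝ) ≤ (d:ℝ)^2 by nlinarith)
        rwa [Real.sqrt_sq hd0.le] at h2
      calc r * ‖ξ₁ - ξ₄‖ ≤ r * (Real.sqrt d * B) :=
            mul_le_mul_of_nonneg_left hnv hr.le
        _ = Real.sqrt d * ((d:ℝ) * ((d.factorial : ℝ) * K ^ d / c)) * δ := by
            rw [hBdef]; field_simp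
        _ ≤ (d:ℝ) * ((d:ℝ) * ((d.factorial : ℝ) * K ^ d / c)) * δ := by
            refine mul_le_mul_of_nonneg_right ?_ hδ.le
            exact mul_le_mul_of_nonneg_right hsqd (by positivity)
        _ = (d:ℝ)^2 * d.factorial * K ^ d / c * δ := by ring
  refine ⟨hmain, ?_⟩
  have hmin0 : 0 ≤ min ‖ξ₁ - ξ₂‖ ‖ξ₁ - ξ₄‖ := le_min (norm_nonneg _) (norm_nonneg _)
  have hmm : min ‖ξ₁ - ξ₂‖ ‖ξ₁ - ξ₄‖ * min ‖ξ₁ - ξ₂‖ ‖ξ₁ - ξ₄‖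
      ≤ (d:ℝ)^2 * d.factorial * K ^ d / c * δ :=
    le_trans (mul_le_mul (min_le_left _ _) (min_le_right _ _) hmin0 (norm_nonneg _)) hmain
  have hs := Real.sqrt_le_sqrt hmm
  rwa [Real.sqrt_mul_self hmin0, Real.sqrt_mul hC0.le] at hs
end

section
/- Let A₁, …, A_l ∈ Sym(ℝ^d) be symmetric matrices with operator norms ‖A_m‖ ≤ M, satisfying the transversality condition with constant c > 0. Then for all vectors v, w ∈ ℝ^d one has ‖v‖ · ‖w‖ ≤ (d M^{d−1} / c) · max_{1 ≤ m ≤ l} |⟨w, A_m v⟩|. -/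
open Matrix Finset

/-- Hadamard's inequality for a matrix whose columns are `v j`. -/
lemma hadamard_det_le {n : ℕ} (v : Fin n → EuclideanSpace ℝ (Fin n)) :
    |Matrix.det (Matrix.of fun i j => v j i)| ≤ ∏ j, ‖v j‖ := by
  haveI : Fact (Module.finrank ℝ (EuclideanSpace ℝ (Fin n)) = n) :=
    ⟨finrank_euclideanSpace_fin⟩
  set b := EuclideanSpace.basisFun (Fin n) ℝ
  set o := b.toBasis.orientation
  have h1 := o.abs_volumeForm_apply_le v
  have h2 := o.volumeForm_robust' b v
  have h3 : b.toBasis.det v = Matrix.det (Matrix.of fun i j => v j i) := by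
    rw [Module.Basis.det_apply]; rfl
  rw [h2, h3] at h1
  exact h1

lemma dotProduct_self_eq_norm_sq {n : ℕ} (x : EuclideanSpace ℝ (Fin n)) :
    dotProduct (x : Fin n → ℝ) x = ‖x‖ ^ 2 := by
  rw [EuclideanSpace.norm_eq, Real.sq_sqrt (by positivity)]
  simp [dotProduct, sq]


/-- **Quantitative biorthogonality bound.** If the symmetric matrices `A₁, …, A_l`
(of operator norm at most `M`) satisfy the transversality condition with constant
`c > 0`, then for all `v, w ∈ ℝ^d`:
`‖v‖ · ‖w‖ ≤ (d M^(d−1) / c) · max_{1 ≤ m ≤ l} |⟨w, A_m v⟩|`. -/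
theorem transversality_bilinear_lower_bound
    (d l : ℕ) (hd : 1 ≤ d) (hl : 1 ≤ l)
    (A : Fin l → Matrix (Fin d) (Fin d) ℝ) (hsymm : ∀ k, (A k).IsSymm)
    (M c : ℝ) (hc : 0 < c)
    (hM : ∀ (k : Fin l) (v : EuclideanSpace ℝ (Fin d)),
      ‖(show EuclideanSpace ℝ (Fin d) from WithLp.toLp 2 ((A k).mulVec v))‖ ≤ M * ‖v‖)
    (htrans : ∀ ν : EuclideanSpace ℝ (Fin d), ‖ν‖ = 1 →
      ∃ idx : Fin d → Fin l,
        c ≤ |Matrix.det (Matrix.of fun i j => ((A (idx j)).mulVec ν) i)|)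
    (v w : EuclideanSpace ℝ (Fin d)) :
    ‖v‖ * ‖w‖ ≤ (d * M ^ (d - 1) / c) *
      ⨆ m : Fin l, |dotProduct (w : Fin d → ℝ) ((A m).mulVec v)| := by
  haveI : NeZero l := ⟨by omega⟩
  haveI : NeZero d := ⟨by omega⟩
  set S : ℝ := ⨆ m : Fin l, |dotProduct (w : Fin d → ℝ) ((A m).mulVec v)| with hS
  have hbdd : BddAbove (Set.range fun m : Fin l =>
      |dotProduct (w : Fin d → ℝ) ((A m).mulVec v)|) :=
    Set.Finite.bddAbove (Set.finite_range _)
  have hSle : ∀ m : Fin l, |dotProduct (w : Fin d → ℝ) ((A m).mulVec v)| ≤ S :=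
    fun m => le_ciSup hbdd m
  have hS0 : 0 ≤ S := le_trans (abs_nonneg _) (hSle ⟨0, by omega⟩)
  -- M is nonnegative
  have hM0 : 0 ≤ M := by
    have h1 : ‖(EuclideanSpace.single (0 : Fin d) (1 : ℝ) : EuclideanSpace ℝ (Fin d))‖ = 1 := by
      simp
    have := hM ⟨0, by omega⟩ (EuclideanSpace.single (0 : Fin d) (1 : ℝ))
    rw [h1, mul_one] at this
    exact le_trans (norm_nonneg _) this
  rcases eq_or_ne v 0 with rfl | hv
  · simp only [norm_zero, zero_mul]
    positivity
  rcases eq_or_ne w 0 with rfl | hw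
  · simp only [norm_zero, mul_zero]
    positivity
  have hvn : (0 : ℝ) < ‖v‖ := norm_pos_iff.mpr hv
  have hwn : (0 : ℝ) < ‖w‖ := norm_pos_iff.mpr hw
  -- unit vectors
  set ν : EuclideanSpace ℝ (Fin d) := ‖v‖⁻¹ • v with hν
  set e : EuclideanSpace ℝ (Fin d) := ‖w‖⁻¹ • w with he
  have hνn : ‖ν‖ = 1 := by
    rw [hν, norm_smul, norm_inv, norm_norm, inv_mul_cancel₀ hvn.ne']
  have hen : ‖e‖ = 1 := by
    rw [he, norm_smul, norm_inv, norm_norm, inv_mul_cancel₀ hwn.ne']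
  obtain ⟨idx, hidx⟩ := htrans ν hνn
  set b : Fin d → EuclideanSpace ℝ (Fin d) := fun j => WithLp.toLp 2 ((A (idx j)).mulVec ν) with hb
  set B : Matrix (Fin d) (Fin d) ℝ := Matrix.of fun i j => b j i with hB
  have hbM : ∀ j, ‖b j‖ ≤ M := by
    intro j
    have := hM (idx j) ν
    rwa [hνn, mul_one] at this
  -- the key identity : det B = ∑ j, (e ⬝ᵥ b j) * (B.updateCol j e).det
  have hee : dotProduct (e : Fin d → ℝ) e = 1 := by
    rw [dotProduct_self_eq_norm_sq, hen, one_pow]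
  have hkey : B.det = ∑ j, dotProduct (e : Fin d → ℝ) (b j) *
      (B.updateCol j (e : Fin d → ℝ)).det := by
    have h1 : B.det • (e : Fin d → ℝ) = B.mulVec (Matrix.cramer B (e : Fin d → ℝ)) := by
      rw [Matrix.cramer_eq_adjugate_mulVec, Matrix.mulVec_mulVec, Matrix.mul_adjugate,
        Matrix.smul_mulVec, Matrix.one_mulVec]
    have h2 : B.det = dotProduct (e : Fin d → ℝ)
        (B.mulVec (Matrix.cramer B (e : Fin d → ℝ))) := by
      rw [← h1, dotProduct_smul, hee, smul_eq_mul, mul_one]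
    rw [h2, dotProduct_mulVec]
    refine Finset.sum_congr rfl fun j _ => ?_
    rw [Matrix.cramer_apply]
    congr 1
  -- Hadamard bound on each minor-type determinant
  have hminor : ∀ j, |(B.updateCol j (e : Fin d → ℝ)).det| ≤ M ^ (d - 1) := by
    intro j
    have heq : B.updateCol j (e : Fin d → ℝ) =
        Matrix.of fun i k => (Function.update b j e) k i := by
      ext i k
      rcases eq_or_ne k j with rfl | hk
      · simp [Matrix.updateCol_apply]
      · simp only [Matrix.updateCol_apply, if_neg hk, Matrix.of_apply,
          Function.update_of_ne hk]
        rfl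
    rw [heq]
    refine le_trans (hadamard_det_le _) ?_
    have hprod : ∏ k, ‖Function.update b j e k‖ =
        ‖e‖ * ∏ k ∈ Finset.univ.erase j, ‖b k‖ := by
      have : (fun k => ‖Function.update b j e k‖) = Function.update (fun k => ‖b k‖) j ‖e‖ := by
        funext k
        rcases eq_or_ne k j with rfl | hk
        · simp
        · simp [Function.update_of_ne hk]
      rw [this, Finset.prod_update_of_mem (Finset.mem_univ j),
        Finset.sdiff_singleton_eq_erase]
    rw [hprod, hen, one_mul]
    calc ∏ k ∈ Finset.univ.erase j, ‖b k‖ ≤ ∏ _k ∈ Finset.univ.erase j, M :=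
          Finset.prod_le_prod (fun k _ => norm_nonneg _) (fun k _ => hbM k)
      _ = M ^ (d - 1) := by
          rw [Finset.prod_const, Finset.card_erase_of_mem (Finset.mem_univ j),
            Finset.card_univ, Fintype.card_fin]
  -- each pairing is controlled by S
  have hpair : ∀ j, |dotProduct (e : Fin d → ℝ) (b j)| ≤ (‖v‖ * ‖w‖)⁻¹ * S := by
    intro j
    have heq : dotProduct (e : Fin d → ℝ) (b j) =
        (‖v‖ * ‖w‖)⁻¹ * dotProduct (w : Fin d → ℝ) ((A (idx j)).mulVec v) := by
      have h1 : ((A (idx j)).mulVec ν : Fin d → ℝ) = ‖v‖⁻¹ • ((A (idx j)).mulVec v) := by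
        rw [hν]
        exact Matrix.mulVec_smul _ _ _
      rw [hb]
      show dotProduct (‖w‖⁻¹ • (w : Fin d → ℝ)) ((A (idx j)).mulVec ν) = _
      rw [h1, smul_dotProduct, dotProduct_smul, smul_eq_mul, smul_eq_mul,
        mul_inv, ← mul_assoc]
      ring
    rw [heq, abs_mul, abs_of_nonneg (by positivity)]
    exact mul_le_mul_of_nonneg_left (hSle (idx j)) (by positivity)
  -- assemble
  have hchain : c ≤ d * ((‖v‖ * ‖w‖)⁻¹ * S * M ^ (d - 1)) := by
    calc c ≤ |B.det| := hidx
      _ = |∑ j, dotProduct (e : Fin d → ℝ) (b j) *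
            (B.updateCol j (e : Fin d → ℝ)).det| := by rw [hkey]
      _ ≤ ∑ j, |dotProduct (e : Fin d → ℝ) (b j) *
            (B.updateCol j (e : Fin d → ℝ)).det| := Finset.abs_sum_le_sum_abs _ _
      _ ≤ ∑ _j : Fin d, (‖v‖ * ‖w‖)⁻¹ * S * M ^ (d - 1) := by
          refine Finset.sum_le_sum fun j _ => ?_
          rw [abs_mul]
          exact mul_le_mul (hpair j) (hminor j) (abs_nonneg _) (by positivity)
      _ = d * ((‖v‖ * ‖w‖)⁻¹ * S * M ^ (d - 1)) := by
          rw [Finset.sum_const, Finset.card_univ, Fintype.card_fin, nsmul_eq_mul]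
  have hP : (0 : ℝ) < ‖v‖ * ‖w‖ := mul_pos hvn hwn
  have h2 : c * (‖v‖ * ‖w‖) ≤ d * M ^ (d - 1) * S := by
    have := mul_le_mul_of_nonneg_right hchain hP.le
    calc c * (‖v‖ * ‖w‖) ≤ d * ((‖v‖ * ‖w‖)⁻¹ * S * M ^ (d - 1)) * (‖v‖ * ‖w‖) := this
      _ = d * M ^ (d - 1) * S * ((‖v‖ * ‖w‖)⁻¹ * (‖v‖ * ‖w‖)) := by ring
      _ = d * M ^ (d - 1) * S := by rw [inv_mul_cancel₀ hP.ne', mul_one]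
  rw [div_mul_eq_mul_div, le_div_iff₀ hc]
  calc ‖v‖ * ‖w‖ * c = c * (‖v‖ * ‖w‖) := by ring
    _ ≤ d * M ^ (d - 1) * S := h2
end

section
/- For any three symmetric matrices A₁, A₂, A₃ ∈ Sym(ℝ³) there exists a unit vector ν ∈ S² such that det(A₁ν, A₂ν, A₃ν) = 0. Consequently, no triple of symmetric 3×3 matrices can satisfy the transversality condition in dimension d = 3. -/
open Matrix

/-- For any three symmetric matrices `A₁, A₂, A₃ ∈ Sym(ℝ³)` there is a unit vector
`ν ∈ S²` with `det(A₁ν, A₂ν, A₃ν) = 0`. Consequently no triple of symmetric `3×3`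
matrices satisfies the transversality condition in dimension `d = 3`. -/
theorem no_transversality_three_symmetric_matrices
    (A₁ A₂ A₃ : Matrix (Fin 3) (Fin 3) ℝ)
    (h₁ : A₁.IsSymm) (h₂ : A₂.IsSymm) (h₃ : A₃.IsSymm) :
    (∃ ν : EuclideanSpace ℝ (Fin 3), ‖ν‖ = 1 ∧
      Matrix.det (Matrix.of fun i j => ((![A₁, A₂, A₃] j).mulVec ν) i) = 0) ∧
    ¬ ∃ c : ℝ, 0 < c ∧ ∀ ν : EuclideanSpace ℝ (Fin 3), ‖ν‖ = 1 →
        ∃ idx : Fin 3 → Fin 3,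
          c ≤ |Matrix.det (Matrix.of fun i j => ((![A₁, A₂, A₃] (idx j)).mulVec ν) i)| := by
  set f : EuclideanSpace ℝ (Fin 3) → ℝ :=
    fun ν => Matrix.det (Matrix.of fun i j => ((![A₁, A₂, A₃] j).mulVec ν) i) with hf
  have hcont : Continuous f := by
    apply Continuous.matrix_det
    apply continuous_matrix
    intro i j
    simp only [Matrix.mulVec, dotProduct, Matrix.of_apply]
    exact continuous_finset_sum _ fun k _ =>
      (continuous_const.mul (EuclideanSpace.proj (𝕜 := ℝ) k).continuous)
  have hodd : ∀ ν, f (-ν) = - f ν := by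
    intro ν
    have hM : (Matrix.of fun i j => ((![A₁, A₂, A₃] j).mulVec (-ν)) i) =
        - Matrix.of fun i j => ((![A₁, A₂, A₃] j).mulVec ν) i := by
      ext i j
      show (![A₁, A₂, A₃] j).mulVec (-ν) i = -((![A₁, A₂, A₃] j).mulVec ν i)
      rw [Matrix.mulVec_neg]
      rfl
    rw [show f (-ν) = (Matrix.of fun i j => ((![A₁, A₂, A₃] j).mulVec (-ν)) i).det from rfl]
    simp only [hf, hM, Matrix.det_neg]
    norm_num
  obtain ⟨ν, hν, hfν⟩ : ∃ ν : EuclideanSpace ℝ (Fin 3), ‖ν‖ = 1 ∧ f ν = 0 := by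
    have hrank : 1 < Module.rank ℝ (EuclideanSpace ℝ (Fin 3)) := by
      rw [← Module.finrank_eq_rank, finrank_euclideanSpace]
      simp
    have hconn := isConnected_sphere hrank (0 : EuclideanSpace ℝ (Fin 3)) zero_le_one
    set ν₀ : EuclideanSpace ℝ (Fin 3) := EuclideanSpace.single 0 1 with hν₀
    have hm : ν₀ ∈ Metric.sphere (0 : EuclideanSpace ℝ (Fin 3)) 1 := by
      simp [hν₀, mem_sphere_zero_iff_norm, EuclideanSpace.norm_single]
    have hm' : -ν₀ ∈ Metric.sphere (0 : EuclideanSpace ℝ (Fin 3)) 1 := by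
      simpa [mem_sphere_zero_iff_norm] using (mem_sphere_zero_iff_norm.mp hm)
    have key : ∃ ν ∈ Metric.sphere (0 : EuclideanSpace ℝ (Fin 3)) 1, f ν = 0 := by
      rcases le_total (f ν₀) 0 with h | h
      · have := hconn.isPreconnected.intermediate_value hm hm' hcont.continuousOn
        have h0 : (0 : ℝ) ∈ Set.Icc (f ν₀) (f (-ν₀)) := by
          rw [hodd]; constructor <;> linarith
        obtain ⟨ν, hνs, hν0⟩ := this h0
        exact ⟨ν, hνs, hν0⟩
      · have := hconn.isPreconnected.intermediate_value hm' hm hcont.continuousOn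
        have h0 : (0 : ℝ) ∈ Set.Icc (f (-ν₀)) (f ν₀) := by
          rw [hodd]; constructor <;> linarith
        obtain ⟨ν, hνs, hν0⟩ := this h0
        exact ⟨ν, hνs, hν0⟩
    obtain ⟨ν, hνs, hν0⟩ := key
    exact ⟨ν, mem_sphere_zero_iff_norm.mp hνs, hν0⟩
  refine ⟨⟨ν, hν, hfν⟩, ?_⟩
  rintro ⟨c, hc, h⟩
  obtain ⟨idx, hidx⟩ := h ν hν
  have hz : Matrix.det (Matrix.of fun i j => ((![A₁, A₂, A₃] (idx j)).mulVec ν) i) = 0 := by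
    by_cases hinj : Function.Injective idx
    · have hbij : Function.Bijective idx := Finite.injective_iff_bijective.mp hinj
      set σ : Equiv.Perm (Fin 3) := Equiv.ofBijective idx hbij with hσ
      have hM : (Matrix.of fun i j => ((![A₁, A₂, A₃] (idx j)).mulVec ν) i) =
          (Matrix.of fun i j => ((![A₁, A₂, A₃] j).mulVec ν) i).submatrix id σ := rfl
      have h0 : (Matrix.of fun i j => ((![A₁, A₂, A₃] j).mulVec ν) i).det = 0 := hfν
      rw [hM, Matrix.det_permute', h0, mul_zero]
    · simp only [Function.Injective, not_forall] at hinj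
      obtain ⟨j, j', hjj', hne⟩ := hinj
      exact Matrix.det_zero_of_column_eq hne (fun k => by simp [hjj'])
  rw [hz] at hidx
  simp at hidx
  linarith
end

section
/- Let d ≥ 1. Consider the family ℱ of symmetric d×d matrices consisting of the identity I_d, the transposition matrices A^{(ij)} for 1 ≤ i < j ≤ d (where A^{(ij)}v swaps the i-th and j-th coordinates of v and fixes the others), and the sign-flip matrices A^{(i)} for 1 ≤ i ≤ d (where A^{(i)}v negates the i-th coordinate of v and fixes the others). Then there exists c > 0 (depending only on d) such that for every unit vector ν ∈ S^{d−1} there exist matrices B₁, …, B_d ∈ ℱ with |det(B₁ν, …, B_dν)| ≥ c. That is, the family ℱ satisfies the transversality condition. -/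
/-- The transposition matrix `A^{(ij)}`: `(A^{(ij)} v)_k = v_j` for `k = i`,
`v_i` for `k = j`, and `v_k` otherwise. -/
def swapMat (d : ℕ) (i j : Fin d) : Matrix (Fin d) (Fin d) ℝ :=
  Matrix.of fun a b =>
    if a = i then (if b = j then 1 else 0)
    else if a = j then (if b = i then 1 else 0)
    else if b = a then 1 else 0

/-- The sign-flip matrix `A^{(i)}`: `(A^{(i)} v)_k = −v_k` for `k = i` and
`v_k` otherwise. -/
def signMat (d : ℕ) (i : Fin d) : Matrix (Fin d) (Fin d) ℝ :=
  Matrix.diagonal fun k => if k = i then -1 else 1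

lemma swapMat_mulVec (d : ℕ) (i j : Fin d) (ν : Fin d → ℝ) (a : Fin d) :
    (swapMat d i j).mulVec ν a =
      if a = i then ν j else if a = j then ν i else ν a := by
  simp only [Matrix.mulVec, dotProduct, swapMat, Matrix.of_apply]
  split_ifs with h1 h2 <;> simp [ite_mul, one_mul, zero_mul]

lemma signMat_mulVec (d : ℕ) (i : Fin d) (ν : Fin d → ℝ) (a : Fin d) :
    (signMat d i).mulVec ν a = if a = i then -(ν a) else ν a := by
  simp only [signMat, Matrix.mulVec_diagonal]
  split_ifs <;> ring

lemma det_updateColumn_add_sum {d : ℕ} (A : Matrix (Fin d) (Fin d) ℝ) (j : Fin d)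
    (t : Fin d → ℝ) (s : Finset (Fin d)) (hj : j ∉ s) :
    (A.updateCol j (fun a => A a j + ∑ m ∈ s, t m * A a m)).det = A.det := by
  induction s using Finset.induction_on with
  | empty => simp
  | @insert m s hm ih =>
    have hjm : j ≠ m := fun h => hj (h ▸ Finset.mem_insert_self m s)
    have hjs : j ∉ s := fun h => hj (Finset.mem_insert_of_mem h)
    set B := A.updateCol j (fun a => A a j + ∑ k ∈ s, t k * A a k) with hBdef
    have key : A.updateCol j (fun a => A a j + ∑ k ∈ Insert.insert m s, t k * A a k)
        = B.updateCol j (fun a => B a j + t m • B a m) := by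
      ext a b
      by_cases hb : b = j
      · subst hb
        simp only [Matrix.updateCol_self, hBdef, Matrix.updateCol_apply,
          if_neg hjm.symm, if_pos rfl]
        rw [Finset.sum_insert hm, smul_eq_mul]
        ring
      · simp [Matrix.updateCol_ne hb, hBdef]
    rw [key, Matrix.det_updateCol_add_smul_self B hjm]
    exact ih hjs

lemma det_arrowhead {d : ℕ} (hd : 0 < d) (A : Matrix (Fin d) (Fin d) ℝ) (i₀ : Fin d)
    (h : ∀ a m, a ≠ m → a ≠ i₀ → A a m = 0) : A.det = ∏ m, A m m := by
  set z : Fin d := ⟨0, hd⟩ with hz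
  set e : Equiv.Perm (Fin d) := Equiv.swap z i₀ with he
  rw [← Matrix.det_submatrix_equiv_self e A]
  have htri : (A.submatrix e e).BlockTriangular id := by
    intro i j hji
    simp only [id] at hji
    have hiz : i ≠ z := by
      intro hiz
      rw [hiz] at hji
      exact absurd hji (by simp [hz, Fin.lt_def])
    have hij : i ≠ j := ne_of_gt hji
    refine h (e i) (e j) (fun hc => hij (e.injective hc)) (fun hc => ?_)
    apply hiz
    have : e i = e z := by rw [hc, he]; simp [Equiv.swap_apply_left]
    exact e.injective this
  rw [Matrix.det_of_upperTriangular htri]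
  simp only [Matrix.submatrix_apply]
  exact Equiv.prod_comp e (fun m => A m m)

/-- The family consisting of the identity, the transpositions `A^{(ij)}` and the
sign flips `A^{(i)}` satisfies the transversality condition: there is `c > 0`
(depending only on `d`) such that every unit vector `ν ∈ S^{d−1}` admits matrices
`B₁, …, B_d` from the family with `|det(B₁ν, …, B_dν)| ≥ c`. -/
theorem reflections_inversions_transversality (d : ℕ) (hd : 1 ≤ d) :
    ∃ c : ℝ, 0 < c ∧ ∀ ν : EuclideanSpace ℝ (Fin d), ‖ν‖ = 1 →
      ∃ B : Fin d → Matrix (Fin d) (Fin d) ℝ,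
        (∀ m, B m = 1 ∨ (∃ i j : Fin d, i ≠ j ∧ B m = swapMat d i j) ∨
          (∃ i : Fin d, B m = signMat d i)) ∧
        c ≤ |Matrix.det (Matrix.of fun a m => ((B m).mulVec ν) a)| := by
  classical
  have hd0 : 0 < d := hd
  have hdR : (1:ℝ) ≤ (d:ℝ) := by exact_mod_cast hd
  have hdpos : (0:ℝ) < d := by linarith
  refine ⟨(1/(2*(d:ℝ)^2))^d, by positivity, ?_⟩
  intro ν hν
  obtain ⟨i₀, -, hmax⟩ := Finset.exists_max_image (Finset.univ : Finset (Fin d))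
    (fun a => |ν a|) ⟨⟨0, hd0⟩, Finset.mem_univ _⟩
  have hmax' : ∀ a, |ν a| ≤ |ν i₀| := fun a => hmax a (Finset.mem_univ a)
  set β := |ν i₀| with hβdef
  have hβ0 : 0 ≤ β := abs_nonneg _
  have hsum : ∑ a, (ν a)^2 = 1 := by
    rw [EuclideanSpace.norm_eq] at hν
    have := Real.sqrt_eq_one.mp hν
    simpa [Real.norm_eq_abs, sq_abs] using this
  have hβd : 1 ≤ (d:ℝ) * β := by
    have h1 : (1:ℝ) ≤ ∑ _a : Fin d, β^2 := by
      rw [← hsum]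
      refine Finset.sum_le_sum fun a _ => ?_
      have := hmax' a
      nlinarith [sq_abs (ν a), abs_nonneg (ν a)]
    rw [Finset.sum_const, Finset.card_univ, Fintype.card_fin, nsmul_eq_mul] at h1
    nlinarith [hβ0, hdR, sq_nonneg β]
  have hβpos : 0 < β := by nlinarith
  -- the matrices
  set B : Fin d → Matrix (Fin d) (Fin d) ℝ := fun m =>
    if m = i₀ then 1 else if β ≤ 2*(d:ℝ)*|ν m| then signMat d m else swapMat d i₀ m with hBdef
  refine ⟨B, ?_, ?_⟩
  · intro m
    by_cases h1 : m = i₀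
    · left; simp [hBdef, h1]
    · by_cases h2 : β ≤ 2*(d:ℝ)*|ν m|
      · right; right; exact ⟨m, by simp [hBdef, h1, h2]⟩
      · right; left; exact ⟨i₀, m, Ne.symm h1, by simp [hBdef, h1, h2]⟩
  set M : Matrix (Fin d) (Fin d) ℝ := Matrix.of fun a m => ((B m).mulVec ν) a with hMdef
  have hMcol : ∀ a m, M a m = if m = i₀ then ν a
      else if β ≤ 2*(d:ℝ)*|ν m| then (if a = m then -(ν a) else ν a)
      else (if a = i₀ then ν m else if a = m then ν i₀ else ν a) := by
    intro a m
    simp only [hMdef, Matrix.of_apply]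
    by_cases h1 : m = i₀
    · simp [hBdef, h1, Matrix.one_mulVec]
    · by_cases h2 : β ≤ 2*(d:ℝ)*|ν m|
      · simp [hBdef, h1, h2, signMat_mulVec]
      · simp [hBdef, h1, h2, swapMat_mulVec]
  have hMi₀ : ∀ a, M a i₀ = ν a := fun a => by rw [hMcol]; simp
  -- first column operations: subtract column i₀ from every other column
  set M₁ : Matrix (Fin d) (Fin d) ℝ :=
    Matrix.of fun a m => if m = i₀ then ν a else M a m - ν a with hM₁def
  have hdet1 : M₁.det = M.det := by
    rw [← Matrix.det_transpose M₁, ← Matrix.det_transpose M]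
    refine Matrix.det_eq_of_forall_row_eq_smul_add_const
      (fun m => if m = i₀ then 0 else (-1:ℝ)) i₀ (by simp) ?_
    intro m a
    simp only [Matrix.transpose_apply, hM₁def, Matrix.of_apply]
    split_ifs with h
    · rw [h, hMi₀]; ring
    · rw [hMi₀]; ring
  have hM₁i₀ : ∀ a, M₁ a i₀ = ν a := by intro a; simp [hM₁def]
  have hM₁e : ∀ a m, m ≠ i₀ → M₁ a m =
      if β ≤ 2*(d:ℝ)*|ν m| then (if a = m then -(2*ν a) else 0)
      else (if a = i₀ then ν m - ν i₀ else if a = m then ν i₀ - ν a else 0) := by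
    intro a m hm
    simp only [hM₁def, Matrix.of_apply, if_neg hm]
    rw [hMcol]
    simp only [if_neg hm]
    split_ifs <;> subst_vars <;> ring
  have hM₁0 : ∀ a m, m ≠ i₀ → a ≠ m → a ≠ i₀ → M₁ a m = 0 := by
    intro a m h1 h2 h3
    rw [hM₁e a m h1]
    split_ifs <;> first | rfl | (exfalso; tauto)
  have hsub : ∀ m, ¬(β ≤ 2*(d:ℝ)*|ν m|) → ν m - ν i₀ ≠ 0 := by
    intro m hm h
    have h2 : 2*(d:ℝ)*|ν m| < β := not_le.mp hm
    have h3 : |ν m| < β := by nlinarith [abs_nonneg (ν m)]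
    rw [sub_eq_zero] at h
    rw [h, ← hβdef] at h3
    exact lt_irrefl β h3
  -- second column operation: clear column i₀
  set t : Fin d → ℝ := fun m =>
    if β ≤ 2*(d:ℝ)*|ν m| then 1/2 else ν m/(ν m - ν i₀) with htdef
  set M₂ : Matrix (Fin d) (Fin d) ℝ :=
    M₁.updateCol i₀ (fun a => M₁ a i₀ + ∑ m ∈ Finset.univ.erase i₀, t m * M₁ a m) with hM₂def
  have hdet2 : M₂.det = M₁.det :=
    det_updateColumn_add_sum M₁ i₀ t _ (Finset.notMem_erase _ _)
  set S : Finset (Fin d) :=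
    (Finset.univ.erase i₀).filter (fun m => ¬ (β ≤ 2*(d:ℝ)*|ν m|)) with hSdef
  set w : Fin d → ℝ := fun m =>
    if m = i₀ then ν i₀ + ∑ k ∈ S, ν k
    else if β ≤ 2*(d:ℝ)*|ν m| then -(2*ν m) else ν i₀ - ν m with hwdef
  have hoff : ∀ a m, a ≠ m → a ≠ i₀ → M₂ a m = 0 := by
    intro a m ham hai
    by_cases hm : m = i₀
    · subst hm
      rw [hM₂def, Matrix.updateCol_self, hM₁i₀ a]
      rw [Finset.sum_eq_single a]
      · rw [hM₁e a a hai]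
        by_cases hFa : β ≤ 2*(d:ℝ)*|ν a|
        · rw [if_pos hFa, if_pos rfl]
          simp only [htdef, if_pos hFa]
          ring
        · rw [if_neg hFa, if_neg hai, if_pos rfl]
          simp only [htdef, if_neg hFa]
          have hne := hsub a hFa
          field_simp
          ring
      · intro k hk hka
        rw [hM₁0 a k (Finset.mem_erase.mp hk).1 (Ne.symm hka) hai, mul_zero]
      · intro ha
        exact absurd (Finset.mem_erase.mpr ⟨hai, Finset.mem_univ a⟩) ha
    · rw [hM₂def, Matrix.updateCol_ne hm]
      exact hM₁0 a m hm ham hai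
  have hdiag : ∀ m, M₂ m m = w m := by
    intro m
    by_cases hm : m = i₀
    · subst hm
      rw [hM₂def, Matrix.updateCol_self, hM₁i₀]
      simp only [hwdef, if_pos rfl]
      congr 1
      rw [hSdef, Finset.sum_filter]
      refine Finset.sum_congr rfl fun k hk => ?_
      have hki₀ : k ≠ m := (Finset.mem_erase.mp hk).1
      rw [hM₁e m k hki₀]
      by_cases hFk : β ≤ 2*(d:ℝ)*|ν k|
      · simp only [htdef, if_pos hFk, if_neg (Ne.symm hki₀), mul_zero]
        rw [if_neg (not_not_intro hFk)]
      · have hne := hsub k hFk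
        simp only [htdef, if_neg hFk, if_pos rfl, not_false_eq_true, if_true]
        field_simp
        rw [if_pos hFk]
    · rw [hM₂def, Matrix.updateCol_ne hm, hM₁e m m hm]
      simp only [hwdef, if_neg hm]
      split_ifs <;> first | rfl | tauto
  have hdet3 : M₂.det = ∏ m, w m := by
    rw [det_arrowhead hd0 M₂ i₀ hoff]
    exact Finset.prod_congr rfl fun m _ => hdiag m
  -- lower bounds on the diagonal entries
  have hsmall : ∀ k, ¬(β ≤ 2*(d:ℝ)*|ν k|) → |ν k| ≤ β/(2*(d:ℝ)) := by
    intro k hk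
    have h2 : 2*(d:ℝ)*|ν k| < β := not_le.mp hk
    rw [le_div_iff₀ (by positivity : (0:ℝ) < 2*(d:ℝ))]
    nlinarith
  have hwbound : ∀ m, β/(2*(d:ℝ)) ≤ |w m| := by
    intro m
    simp only [hwdef]
    by_cases hm : m = i₀
    · rw [if_pos hm]
      have hScard : ((S.card:ℝ)) ≤ (d:ℝ) - 1 := by
        have h1 : S.card ≤ (Finset.univ.erase i₀).card := Finset.card_filter_le _ _
        have h2 : (Finset.univ.erase i₀).card = d - 1 := by
          rw [Finset.card_erase_of_mem (Finset.mem_univ _), Finset.card_univ, Fintype.card_fin]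
        rw [h2] at h1
        calc ((S.card:ℝ)) ≤ ((d-1:ℕ):ℝ) := by exact_mod_cast h1
        _ = (d:ℝ) - 1 := by rw [Nat.cast_sub hd]; simp
      have hS : |∑ k ∈ S, ν k| ≤ ((d:ℝ) - 1) * (β/(2*(d:ℝ))) := by
        calc |∑ k ∈ S, ν k| ≤ ∑ k ∈ S, |ν k| := Finset.abs_sum_le_sum_abs _ _
        _ ≤ ∑ _k ∈ S, β/(2*(d:ℝ)) := by
            refine Finset.sum_le_sum fun k hk => hsmall k ?_
            exact (Finset.mem_filter.mp hk).2
        _ = (S.card:ℝ) * (β/(2*(d:ℝ))) := by rw [Finset.sum_const, nsmul_eq_mul]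
        _ ≤ ((d:ℝ)-1) * (β/(2*(d:ℝ))) :=
            mul_le_mul_of_nonneg_right hScard (by positivity)
      have habs : β - |∑ k ∈ S, ν k| ≤ |ν i₀ + ∑ k ∈ S, ν k| := by
        have h := abs_sub_abs_le_abs_sub (ν i₀) (-(∑ k ∈ S, ν k))
        rw [abs_neg, sub_neg_eq_add] at h
        rw [hβdef]
        linarith
      have key : ((d:ℝ)-1)*(β/(2*(d:ℝ))) = β/2 - β/(2*(d:ℝ)) := by
        field_simp
      linarith
    · rw [if_neg hm]
      by_cases hFm : β ≤ 2*(d:ℝ)*|ν m|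
      · rw [if_pos hFm]
        have h1 : |(-(2*ν m))| = 2*|ν m| := by rw [abs_neg, abs_mul, abs_two]
        rw [h1, div_le_iff₀ (by positivity : (0:ℝ) < 2*(d:ℝ))]
        nlinarith [abs_nonneg (ν m)]
      · rw [if_neg hFm]
        have h1 := hsmall m hFm
        have h2 : β - |ν m| ≤ |ν i₀ - ν m| := by
          have h := abs_sub_abs_le_abs_sub (ν i₀) (ν m)
          rw [hβdef]
          linarith
        have hu0 : (0:ℝ) ≤ β/(2*(d:ℝ)) := by positivity
        have key : (d:ℝ)*(β/(2*(d:ℝ)))*2 = β := by field_simp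
        nlinarith
  have hβ2d : 1/(2*(d:ℝ)^2) ≤ β/(2*(d:ℝ)) := by
    rw [div_le_div_iff₀ (by positivity) (by positivity)]
    nlinarith
  calc (1/(2*(d:ℝ)^2))^d = ∏ _m : Fin d, 1/(2*(d:ℝ)^2) := by
        rw [Finset.prod_const, Finset.card_univ, Fintype.card_fin]
  _ ≤ ∏ m, |w m| :=
      Finset.prod_le_prod (fun _ _ => by positivity) (fun m _ => le_trans hβ2d (hwbound m))
  _ = |∏ m, w m| := (Finset.abs_prod _ _).symm
  _ = |M.det| := by rw [← hdet3, hdet2, hdet1]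
end

section
/- Let A₁, …, A_l ∈ Sym(ℝ^d), q_i(ξ) = (1/2)⟨ξ, A_i ξ⟩, and fix ξ_τ ∈ ℝ^d and s > 0. Define the generalized Lorentz transformation Λ_{τ,s} : ℝ^d × ℝ^l × ℝ → ℝ^d × ℝ^l × ℝ by Λ_{τ,s}(ξ, ζ, h) = (η, (s^{−2} ζ_i − s^{−1} ⟨η, A_i ξ_τ⟩ − (1/2) h s^{−2} ⟨ξ_τ, A_i ξ_τ⟩)_{i=1,…,l}, h), where η = s^{−1}(ξ − h ξ_τ). Then Λ_{τ,s} maps the cone over the quadratic manifold to itself exactly: for every ξ ∈ ℝ^d and h ≠ 0, Λ_{τ,s}(ξ, (q_1(ξ)/h, …, q_l(ξ)/h), h) = (η, (q_1(η)/h, …, q_l(η)/h), h). Moreover, ‖ξ/h − ξ_τ‖ ≤ s implies ‖η/h‖ ≤ 1. -/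
lemma symm_dot {d : ℕ} (A : Matrix (Fin d) (Fin d) ℝ) (hA : A.IsSymm)
    (x y : Fin d → ℝ) :
    dotProduct x (A.mulVec y) = dotProduct y (A.mulVec x) := by
  rw [Matrix.dotProduct_mulVec, ← Matrix.mulVec_transpose, hA.eq,
    dotProduct_comm]

lemma key_identity {d : ℕ} (A : Matrix (Fin d) (Fin d) ℝ) (hA : A.IsSymm)
    (x t : Fin d → ℝ) (s h : ℝ) (hh : h ≠ 0) (hs : s ≠ 0) :
    s⁻¹ ^ 2 * (1 / 2 * dotProduct x (A.mulVec x) / h)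
      - s⁻¹ * dotProduct (s⁻¹ • (x - h • t)) (A.mulVec t)
      - 1 / 2 * h * s⁻¹ ^ 2 * dotProduct t (A.mulVec t)
    = 1 / 2 * dotProduct (s⁻¹ • (x - h • t)) (A.mulVec (s⁻¹ • (x - h • t))) / h := by
  simp only [smul_dotProduct, dotProduct_smul, Matrix.mulVec_smul,
    sub_dotProduct, dotProduct_sub, Matrix.mulVec_sub, smul_eq_mul]
  rw [symm_dot A hA t x]
  field_simp
  ring

/-- **Generalized Lorentz transformation.** With pure quadratic forms
`q_i(ξ) = (1/2)⟨ξ, A_i ξ⟩`, fixed `ξ_τ` and `s > 0`, the map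
`Λ_{τ,s}(ξ, ζ, h) = (η, (s⁻²ζ_i − s⁻¹⟨η, A_i ξ_τ⟩ − (1/2) h s⁻²⟨ξ_τ, A_i ξ_τ⟩)_i, h)`
with `η = s⁻¹(ξ − h ξ_τ)` maps the cone over the quadratic manifold to itself:
`Λ_{τ,s}(ξ, (q_i(ξ)/h)_i, h) = (η, (q_i(η)/h)_i, h)` for `h ≠ 0`. Moreover
`‖ξ/h − ξ_τ‖ ≤ s` implies `‖η/h‖ ≤ 1`. -/
theorem generalized_lorentz_transformation
    (d l : ℕ) (A : Fin l → Matrix (Fin d) (Fin d) ℝ) (hA : ∀ i, (A i).IsSymm)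
    (ξτ : EuclideanSpace ℝ (Fin d)) (s : ℝ) (hs : 0 < s)
    (q : Fin l → EuclideanSpace ℝ (Fin d) → ℝ)
    (hq : ∀ (i : Fin l) (ξ : EuclideanSpace ℝ (Fin d)),
      q i ξ = (1/2) * dotProduct (ξ : Fin d → ℝ) ((A i).mulVec ξ))
    (Λ : EuclideanSpace ℝ (Fin d) × (Fin l → ℝ) × ℝ →
      EuclideanSpace ℝ (Fin d) × (Fin l → ℝ) × ℝ)
    (hΛ : ∀ (ξ : EuclideanSpace ℝ (Fin d)) (ζ : Fin l → ℝ) (h : ℝ),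
      Λ (ξ, ζ, h) = (s⁻¹ • (ξ - h • ξτ),
        fun i => s⁻¹ ^ 2 * ζ i
          - s⁻¹ * dotProduct ((s⁻¹ • (ξ - h • ξτ) : EuclideanSpace ℝ (Fin d)) : Fin d → ℝ)
              ((A i).mulVec ξτ)
          - (1/2) * h * s⁻¹ ^ 2 * dotProduct (ξτ : Fin d → ℝ) ((A i).mulVec ξτ),
        h)) :
    ∀ (ξ : EuclideanSpace ℝ (Fin d)) (h : ℝ), h ≠ 0 →
      (Λ (ξ, fun i => q i ξ / h, h) =
        (s⁻¹ • (ξ - h • ξτ), fun i => q i (s⁻¹ • (ξ - h • ξτ)) / h, h)) ∧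
      (‖h⁻¹ • ξ - ξτ‖ ≤ s → ‖h⁻¹ • (s⁻¹ • (ξ - h • ξτ) : EuclideanSpace ℝ (Fin d))‖ ≤ 1) := by
  intro ξ h hh
  constructor
  · rw [hΛ]
    refine Prod.ext rfl (Prod.ext ?_ rfl)
    funext i
    simp only [hq]
    exact key_identity (A i) (hA i) (ξ : Fin d → ℝ) (ξτ : Fin d → ℝ) s h hh hs.ne'
  · intro hle
    have heq : (h⁻¹ • (s⁻¹ • (ξ - h • ξτ)) : EuclideanSpace ℝ (Fin d))
        = s⁻¹ • (h⁻¹ • ξ - ξτ) := by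
      rw [smul_comm, smul_sub, smul_smul, inv_mul_cancel₀ hh, one_smul]
    rw [heq, norm_smul]
    have : ‖s⁻¹‖ = s⁻¹ := by rw [Real.norm_eq_abs, abs_of_pos (by positivity)]
    rw [this]
    calc s⁻¹ * ‖h⁻¹ • ξ - ξτ‖ ≤ s⁻¹ * s := by
          exact mul_le_mul_of_nonneg_left hle (by positivity)
      _ = 1 := inv_mul_cancel₀ hs.ne'
end

section
/- Fix D ≥ 1. There exists a constant C > 0 (depending on the quadratic forms q_k and on D) such that the following holds for all r ≥ 1, all dyadic σ ∈ [r^{−1}, 1], all h ∈ ℝ with |h| ≤ σ², and all η ∈ B_d(0,1): whenever ω = h c(η) + Σ_{i=1}^d ℓ_i t_i(η) + Σ_{j=1}^l c_j n_j(η) with |ℓ_i| ≤ D r^{−1} σ for all i and |c_j| ≤ D r^{−2} for all j, there exist a lattice point ξ ∈ r^{−1}σ^{−1} ℤ^d with ‖ξ − η‖ ≤ C r^{−1} σ^{−1} and coefficients ℓ'_i, c'_j ∈ ℝ with |ℓ'_i| ≤ C D r^{−1} σ and |c'_j| ≤ C D r^{−2} such that ω = h c(ξ) + Σ_{i=1}^d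 ℓ'_i t_i(ξ) + Σ_{j=1}^l c'_j n_j(ξ). -/
set_option maxHeartbeats 1000000


noncomputable section

/-- `ℝ^{n+1}` with `n = d + l`, coordinates split as `(ξ, ζ, h)`. -/
abbrev ConeSpace (d l : ℕ) := EuclideanSpace ℝ (Fin d ⊕ Fin l ⊕ Unit)

/-- The affine quadratic form `q_k(ξ) = (1/2)⟨ξ, A_k ξ⟩ + ⟨b_k, ξ⟩ + c_k`. -/
def qForm {d l : ℕ} (A : Fin l → Matrix (Fin d) (Fin d) ℝ)
    (b : Fin l → EuclideanSpace ℝ (Fin d)) (c0 : Fin l → ℝ)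
    (k : Fin l) (ξ : EuclideanSpace ℝ (Fin d)) : ℝ :=
  (1/2) * dotProduct (ξ : Fin d → ℝ) ((A k).mulVec ξ)
    + dotProduct (b k : Fin d → ℝ) ξ + c0 k

/-- `∂_i q_k(ξ) = (A_k ξ + b_k)_i`. -/
def qGrad {d l : ℕ} (A : Fin l → Matrix (Fin d) (Fin d) ℝ)
    (b : Fin l → EuclideanSpace ℝ (Fin d)) (k : Fin l)
    (ξ : EuclideanSpace ℝ (Fin d)) (i : Fin d) : ℝ :=
  ((A k).mulVec ξ) i + b k i

/-- The central line vector `c(η) = (η, q_1(η), …, q_l(η), 1) ∈ ℝ^{n+1}`. -/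
def cVec {d l : ℕ} (A : Fin l → Matrix (Fin d) (Fin d) ℝ)
    (b : Fin l → EuclideanSpace ℝ (Fin d)) (c0 : Fin l → ℝ)
    (η : EuclideanSpace ℝ (Fin d)) : ConeSpace d l :=
  WithLp.toLp 2 fun x => match x with
  | Sum.inl i => η i
  | Sum.inr (Sum.inl k) => qForm A b c0 k η
  | Sum.inr (Sum.inr _) => 1

/-- The tangent vector `t_i(η) = (e_i, ∂_i q_1(η), …, ∂_i q_l(η), 0) ∈ ℝ^{n+1}`. -/
def tVec {d l : ℕ} (A : Fin l → Matrix (Fin d) (Fin d) ℝ)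
    (b : Fin l → EuclideanSpace ℝ (Fin d))
    (η : EuclideanSpace ℝ (Fin d)) (i : Fin d) : ConeSpace d l :=
  WithLp.toLp 2 fun x => match x with
  | Sum.inl i' => if i' = i then 1 else 0
  | Sum.inr (Sum.inl k) => qGrad A b k η i
  | Sum.inr (Sum.inr _) => 0

/-- The normal vector `n_j(η) = (−∂_1 q_j(η), …, −∂_d q_j(η), e_j, 0) ∈ ℝ^{n+1}`. -/
def nVec {d l : ℕ} (A : Fin l → Matrix (Fin d) (Fin d) ℝ)
    (b : Fin l → EuclideanSpace ℝ (Fin d))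
    (η : EuclideanSpace ℝ (Fin d)) (j : Fin l) : ConeSpace d l :=
  WithLp.toLp 2 fun x => match x with
  | Sum.inl i => -(qGrad A b j η i)
  | Sum.inr (Sum.inl k) => if k = j then 1 else 0
  | Sum.inr (Sum.inr _) => 0

/-- The lattice points `R(ρ²) = B_d(0,1) ∩ ρℤ^d`. -/
def latticeBall (d : ℕ) (ρ : ℝ) : Set (EuclideanSpace ℝ (Fin d)) :=
  {ξ | ‖ξ‖ < 1 ∧ ∃ z : Fin d → ℤ, ∀ i, ξ i = ρ * (z i : ℝ)}

/-- The `K`-dilated centered plank `K·Θ(σ, η)` (with `K = 1` this is `Θ(σ, η)`):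
all `ω = a c(η) + Σ b_i t_i(η) + Σ c_j n_j(η)` with `|a| ≤ Kσ²`,
`|b_i| ≤ K E r⁻¹ σ`, `|c_j| ≤ K E r⁻²`. -/
def plankGen {d l : ℕ} (A : Fin l → Matrix (Fin d) (Fin d) ℝ)
    (b : Fin l → EuclideanSpace ℝ (Fin d)) (c0 : Fin l → ℝ)
    (E r σ K : ℝ) (η : EuclideanSpace ℝ (Fin d)) : Set (ConeSpace d l) :=
  {ω | ∃ (a : ℝ) (bb : Fin d → ℝ) (cc : Fin l → ℝ),
    |a| ≤ K * σ ^ 2 ∧ (∀ i, |bb i| ≤ K * E * r⁻¹ * σ) ∧ (∀ j, |cc j| ≤ K * E * r⁻¹ ^ 2) ∧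
    ω = a • cVec A b c0 η + (∑ i, bb i • tVec A b η i) + ∑ j, cc j • nVec A b η j}

/-- `⋃ CP_σ`, the union of the centered planks `Θ(σ, η)`, `η ∈ R(r⁻²σ⁻²)`. -/
def unionCP {d l : ℕ} (A : Fin l → Matrix (Fin d) (Fin d) ℝ)
    (b : Fin l → EuclideanSpace ℝ (Fin d)) (c0 : Fin l → ℝ)
    (E r σ : ℝ) : Set (ConeSpace d l) :=
  ⋃ η ∈ latticeBall d (r⁻¹ * σ⁻¹), plankGen A b c0 E r σ 1 η

/-- `Ω_σ = ⋃CP_σ \ ⋃CP_{σ/2}` for `σ > r⁻¹`, and `Ω_{r⁻¹} = ⋃CP_{r⁻¹}`. -/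
def OmegaSet {d l : ℕ} (A : Fin l → Matrix (Fin d) (Fin d) ℝ)
    (b : Fin l → EuclideanSpace ℝ (Fin d)) (c0 : Fin l → ℝ)
    (E r σ : ℝ) : Set (ConeSpace d l) :=
  if σ = r⁻¹ then unionCP A b c0 E r σ
  else unionCP A b c0 E r σ \ unionCP A b c0 E r (σ / 2)

/-- The slab `θ(ξ)`: all `a c(ξ) + Σ b_i t_i(ξ) + Σ c_j n_j(ξ)` with `a ∈ [1/2, 1]`,
`|b_i| ≤ D r⁻¹`, `|c_j| ≤ D r⁻²`. -/
def slab {d l : ℕ} (A : Fin l → Matrix (Fin d) (Fin d) ℝ)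
    (b : Fin l → EuclideanSpace ℝ (Fin d)) (c0 : Fin l → ℝ)
    (D r : ℝ) (ξ : EuclideanSpace ℝ (Fin d)) : Set (ConeSpace d l) :=
  {ω | ∃ (a : ℝ) (bb : Fin d → ℝ) (cc : Fin l → ℝ),
    a ∈ Set.Icc (1/2 : ℝ) 1 ∧ (∀ i, |bb i| ≤ D * r⁻¹) ∧ (∀ j, |cc j| ≤ D * r⁻¹ ^ 2) ∧
    ω = a • cVec A b c0 ξ + (∑ i, bb i • tVec A b ξ i) + ∑ j, cc j • nVec A b ξ j}

/-- The Minkowski difference `θ̃(ξ) = θ(ξ) − θ(ξ)`. -/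
def slabDiff {d l : ℕ} (A : Fin l → Matrix (Fin d) (Fin d) ℝ)
    (b : Fin l → EuclideanSpace ℝ (Fin d)) (c0 : Fin l → ℝ)
    (D r : ℝ) (ξ : EuclideanSpace ℝ (Fin d)) : Set (ConeSpace d l) :=
  {ω | ∃ u ∈ slab A b c0 D r ξ, ∃ v ∈ slab A b c0 D r ξ, ω = u - v}

end

noncomputable section

lemma ConeSpace.add_apply' {d l : ℕ} (f g : ConeSpace d l) (x) : (f + g) x = f x + g x := rfl
lemma ConeSpace.smul_apply' {d l : ℕ} (c : ℝ) (f : ConeSpace d l) (x) : (c • f) x = c * f x := rfl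
lemma ConeSpace.sum_apply' {d l : ℕ} {ι : Type*} (s : Finset ι) (f : ι → ConeSpace d l) (x) :
    (∑ i ∈ s, f i) x = ∑ i ∈ s, f i x := by
  induction s using Finset.cons_induction with
  | empty => simp only [Finset.sum_empty]; rfl
  | cons a s ha ih => rw [Finset.sum_cons, Finset.sum_cons, ConeSpace.add_apply', ih]

lemma euclid_abs_le_norm {d : ℕ} (η : EuclideanSpace ℝ (Fin d)) (i : Fin d) : |η i| ≤ ‖η‖ := by
  rw [EuclideanSpace.norm_eq]
  calc |η i| = Real.sqrt (|η i|^2) := (Real.sqrt_sq (abs_nonneg _)).symm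
  _ ≤ _ := by
      apply Real.sqrt_le_sqrt
      have := Finset.single_le_sum (f := fun j => ‖η j‖^2) (fun j _ => sq_nonneg _)
        (Finset.mem_univ i)
      simpa [Real.norm_eq_abs] using this


/-- **Re-centering lemma (Lemma on representations, I).** There is `C > 0` (depending
on the quadratic forms and `D`) such that: for `r ≥ 1`, dyadic `σ ∈ [r⁻¹, 1]`,
`|h| ≤ σ²`, `η ∈ B_d(0,1)`, any point
`ω = h c(η) + Σ ℓ_i t_i(η) + Σ c_j n_j(η)` with `|ℓ_i| ≤ D r⁻¹ σ`, `|c_j| ≤ D r⁻²`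
can be re-represented at a lattice point `ξ ∈ r⁻¹σ⁻¹ℤ^d` with `‖ξ − η‖ ≤ C r⁻¹σ⁻¹`:
`ω = h c(ξ) + Σ ℓ'_i t_i(ξ) + Σ c'_j n_j(ξ)` with `|ℓ'_i| ≤ C D r⁻¹ σ`,
`|c'_j| ≤ C D r⁻²`. -/
theorem recentering_representation
    (d l : ℕ) (A : Fin l → Matrix (Fin d) (Fin d) ℝ) (hsymm : ∀ k, (A k).IsSymm)
    (b : Fin l → EuclideanSpace ℝ (Fin d)) (c0 : Fin l → ℝ)
    (D : ℝ) (hD : 1 ≤ D) :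
    ∃ C : ℝ, 0 < C ∧
      ∀ r : ℝ, 1 ≤ r →
      ∀ σ : ℝ, (∃ z : ℤ, σ = 2 ^ z) → r⁻¹ ≤ σ → σ ≤ 1 →
      ∀ h : ℝ, |h| ≤ σ ^ 2 →
      ∀ η : EuclideanSpace ℝ (Fin d), ‖η‖ < 1 →
      ∀ (ℓ : Fin d → ℝ) (cc : Fin l → ℝ) (ω : ConeSpace d l),
        (∀ i, |ℓ i| ≤ D * r⁻¹ * σ) → (∀ j, |cc j| ≤ D * r⁻¹ ^ 2) →
        ω = h • cVec A b c0 η + (∑ i, ℓ i • tVec A b η i) + ∑ j, cc j • nVec A b η j →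
        ∃ ξ : EuclideanSpace ℝ (Fin d),
          (∃ z : Fin d → ℤ, ∀ i, ξ i = r⁻¹ * σ⁻¹ * (z i : ℝ)) ∧
          ‖ξ - η‖ ≤ C * r⁻¹ * σ⁻¹ ∧
          ∃ (ℓ' : Fin d → ℝ) (cc' : Fin l → ℝ),
            (∀ i, |ℓ' i| ≤ C * D * r⁻¹ * σ) ∧ (∀ j, |cc' j| ≤ C * D * r⁻¹ ^ 2) ∧
            ω = h • cVec A b c0 ξ + (∑ i, ℓ' i • tVec A b ξ i)
              + ∑ j, cc' j • nVec A b ξ j := by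
  classical
  set Ka : ℝ := 1 + ∑ k : Fin l, ∑ i : Fin d, ∑ i' : Fin d, |A k i i'| with hKa_def
  set Kb : ℝ := 1 + ∑ k : Fin l, ∑ i : Fin d, |b k i| with hKb_def
  have hKa1 : (1:ℝ) ≤ Ka := by
    have : (0:ℝ) ≤ ∑ k : Fin l, ∑ i : Fin d, ∑ i' : Fin d, |A k i i'| :=
      Finset.sum_nonneg fun _ _ => Finset.sum_nonneg fun _ _ =>
        Finset.sum_nonneg fun _ _ => abs_nonneg _
    rw [hKa_def]; linarith
  have hKb1 : (1:ℝ) ≤ Kb := by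
    have : (0:ℝ) ≤ ∑ k : Fin l, ∑ i : Fin d, |b k i| :=
      Finset.sum_nonneg fun _ _ => Finset.sum_nonneg fun _ _ => abs_nonneg _
    rw [hKb_def]; linarith
  have hKaA : ∀ k i i', |A k i i'| ≤ Ka := by
    intro k i i'
    have h1 : |A k i i'| ≤ ∑ i'' : Fin d, |A k i i''| :=
      Finset.single_le_sum (f := fun i'' : Fin d => |A k i i''|)
        (fun _ _ => abs_nonneg _) (Finset.mem_univ i')
    have h2 : (∑ i'' : Fin d, |A k i i''|) ≤ ∑ i0 : Fin d, ∑ i'' : Fin d, |A k i0 i''| :=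
      Finset.single_le_sum (f := fun i0 : Fin d => ∑ i'' : Fin d, |A k i0 i''|)
        (fun _ _ => Finset.sum_nonneg fun _ _ => abs_nonneg _) (Finset.mem_univ i)
    have h3 : (∑ i0 : Fin d, ∑ i'' : Fin d, |A k i0 i''|)
        ≤ ∑ k0 : Fin l, ∑ i0 : Fin d, ∑ i'' : Fin d, |A k0 i0 i''| :=
      Finset.single_le_sum (f := fun k0 : Fin l => ∑ i0 : Fin d, ∑ i'' : Fin d, |A k0 i0 i''|)
        (fun _ _ => Finset.sum_nonneg fun _ _ => Finset.sum_nonneg fun _ _ => abs_nonneg _)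
        (Finset.mem_univ k)
    rw [hKa_def]; linarith
  have hKbB : ∀ k i, |b k i| ≤ Kb := by
    intro k i
    have h1 : |b k i| ≤ ∑ i'' : Fin d, |b k i''| :=
      Finset.single_le_sum (f := fun i'' : Fin d => |b k i''|)
        (fun _ _ => abs_nonneg _) (Finset.mem_univ i)
    have h2 : (∑ i'' : Fin d, |b k i''|) ≤ ∑ k0 : Fin l, ∑ i'' : Fin d, |b k0 i''| :=
      Finset.single_le_sum (f := fun k0 : Fin l => ∑ i'' : Fin d, |b k0 i''|)
        (fun _ _ => Finset.sum_nonneg fun _ _ => abs_nonneg _) (Finset.mem_univ k)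
    rw [hKb_def]; linarith
  have hd0 : (0:ℝ) ≤ (d:ℝ) := Nat.cast_nonneg d
  have hl0 : (0:ℝ) ≤ (l:ℝ) := Nat.cast_nonneg l
  have hKa0 : (0:ℝ) ≤ Ka := by linarith
  have hKb0 : (0:ℝ) ≤ Kb := by linarith
  set Kg : ℝ := 2*(d:ℝ)*Ka + Kb with hKg_def
  have hKg1 : (1:ℝ) ≤ Kg := by
    rw [hKg_def]
    linarith [mul_nonneg (mul_nonneg (by norm_num : (0:ℝ) ≤ 2) hd0) hKa0]
  have hKg0 : (0:ℝ) ≤ Kg := by linarith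
  set C1 : ℝ := 2*(d:ℝ)^2*Ka + 1 + (d:ℝ)*(l:ℝ)*Kg^2 with hC1_def
  have hC11 : (1:ℝ) ≤ C1 := by
    rw [hC1_def]
    linarith [mul_nonneg (mul_nonneg (by norm_num : (0:ℝ) ≤ 2) (sq_nonneg (d:ℝ))) hKa0,
      mul_nonneg (mul_nonneg hd0 hl0) (sq_nonneg Kg)]
  set C2 : ℝ := ((l:ℝ)+1)*C1 with hC2_def
  have hC21 : (1:ℝ) ≤ C2 := by
    rw [hC2_def]
    linarith [mul_nonneg hl0 (by linarith : (0:ℝ) ≤ C1)]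
  set C3 : ℝ := 2 + (l:ℝ)*Kg + (l:ℝ)*Kg*C2 with hC3_def
  have hC32 : (2:ℝ) ≤ C3 := by
    rw [hC3_def]
    linarith [mul_nonneg hl0 hKg0, mul_nonneg (mul_nonneg hl0 hKg0) (by linarith : (0:ℝ) ≤ C2)]
  refine ⟨C3 + C2 + (d:ℝ) + 1, by linarith, ?_⟩
  intro r hr σ _hdy hσl hσu h hh η hη ℓ cc ω hℓ hcc hω
  have hr0 : (0:ℝ) < r := by linarith
  have hrinv : (0:ℝ) < r⁻¹ := inv_pos.2 hr0
  have hσ0 : (0:ℝ) < σ := lt_of_lt_of_le hrinv hσl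
  have hσinv0 : (0:ℝ) < σ⁻¹ := inv_pos.2 hσ0
  have hσinvr : σ⁻¹ ≤ r := by
    have := inv_anti₀ hrinv hσl
    rwa [inv_inv] at this
  set ρ : ℝ := r⁻¹ * σ⁻¹ with hρ_def
  have hρ0 : (0:ℝ) < ρ := mul_pos hrinv hσinv0
  have hρ1 : ρ ≤ 1 := by
    have := mul_le_mul_of_nonneg_left hσinvr hrinv.le
    rw [hρ_def]
    simpa [inv_mul_cancel₀ hr0.ne'] using this
  have hσρ1 : σ * ρ = r⁻¹ := by rw [hρ_def]; field_simp
  have hσρ2 : σ^2 * ρ^2 = r⁻¹^2 := by rw [hρ_def]; field_simp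
  have hσ2ρ : σ^2 * ρ = r⁻¹ * σ := by rw [hρ_def]; field_simp
  have hr2le : r⁻¹^2 ≤ r⁻¹*σ := by
    have : r⁻¹ * r⁻¹ ≤ r⁻¹ * σ := mul_le_mul_of_nonneg_left hσl hrinv.le
    calc r⁻¹^2 = r⁻¹ * r⁻¹ := sq r⁻¹
    _ ≤ r⁻¹ * σ := this
  set ξ : EuclideanSpace ℝ (Fin d) := WithLp.toLp 2 (fun i => ρ * ((round (η i / ρ) : ℤ) : ℝ)) with hξ_def
  have hlat : ∃ z : Fin d → ℤ, ∀ i, ξ i = ρ * ((z i : ℤ) : ℝ) :=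
    ⟨fun i => round (η i / ρ), fun i => rfl⟩
  have hδle : ∀ i, |ξ i - η i| ≤ ρ/2 := by
    intro i
    have h1 : ξ i - η i = ρ * (((round (η i / ρ) : ℤ) : ℝ) - η i / ρ) := by
      simp only [hξ_def]
      field_simp
    rw [h1, abs_mul, abs_of_pos hρ0, abs_sub_comm]
    have h2 := abs_sub_round (η i / ρ)
    calc ρ * |η i / ρ - (round (η i / ρ) : ℝ)| ≤ ρ * (1/2) :=
      mul_le_mul_of_nonneg_left h2 hρ0.le
    _ = ρ/2 := by ring
  have hηle : ∀ i, |η i| ≤ 1 := fun i => le_trans (euclid_abs_le_norm η i) hη.le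
  have hξle : ∀ i, |ξ i| ≤ 2 := by
    intro i
    have h1 : |ξ i| ≤ |η i| + |ξ i - η i| := by
      calc |ξ i| = |η i + (ξ i - η i)| := by ring_nf
      _ ≤ |η i| + |ξ i - η i| := abs_add_le _ _
    have := hδle i
    have := hηle i
    linarith
  -- gradient bounds
  have hgrad_bound : ∀ (x : EuclideanSpace ℝ (Fin d)), (∀ i, |x i| ≤ 2) →
      ∀ k i, |qGrad A b k x i| ≤ Kg := by
    intro x hx k i
    have h1 : |((A k).mulVec x) i| ≤ 2*(d:ℝ)*Ka := by
      simp only [Matrix.mulVec, dotProduct]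
      calc |∑ i', A k i i' * x i'| ≤ ∑ i', |A k i i' * x i'| := Finset.abs_sum_le_sum_abs _ _
      _ ≤ ∑ _i' : Fin d, Ka * 2 := Finset.sum_le_sum fun i' _ => by
          rw [abs_mul]
          exact mul_le_mul (hKaA k i i') (hx i') (abs_nonneg _) hKa0
      _ = (d:ℝ) * (Ka * 2) := by simp [Finset.sum_const, Finset.card_univ]
      _ = 2*(d:ℝ)*Ka := by ring
    have h2 : |qGrad A b k x i| ≤ |((A k).mulVec x) i| + |b k i| := by
      simp only [qGrad]; exact abs_add_le _ _
    have := hKbB k i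
    rw [hKg_def]; linarith
  have hgξ : ∀ k i, |qGrad A b k ξ i| ≤ Kg := hgrad_bound ξ hξle
  have hgη : ∀ k i, |qGrad A b k η i| ≤ Kg :=
    hgrad_bound η (fun i => by linarith [hηle i])
  have hAδ : ∀ k i, |((A k).mulVec (fun i' => ξ i' - η i')) i| ≤ (d:ℝ) * Ka * ρ := by
    intro k i
    simp only [Matrix.mulVec, dotProduct]
    calc |∑ i', A k i i' * (ξ i' - η i')| ≤ ∑ i', |A k i i' * (ξ i' - η i')| :=
      Finset.abs_sum_le_sum_abs _ _
    _ ≤ ∑ _i' : Fin d, Ka * ρ := Finset.sum_le_sum fun i' _ => by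
        rw [abs_mul]
        have := hδle i'
        exact mul_le_mul (hKaA k i i') (by linarith) (abs_nonneg _) hKa0
    _ = (d:ℝ) * (Ka * ρ) := by simp [Finset.sum_const, Finset.card_univ]
    _ = (d:ℝ) * Ka * ρ := by ring
  have hgdiff : ∀ k i, qGrad A b k η i - qGrad A b k ξ i
      = -((A k).mulVec (fun i' => ξ i' - η i')) i := by
    intro k i
    simp only [qGrad, Matrix.mulVec, dotProduct, mul_sub]
    rw [Finset.sum_sub_distrib]
    ring
  -- symmetry
  have hsym' : ∀ k, ∑ i, η i * ((A k).mulVec ξ) i = ∑ i, ξ i * ((A k).mulVec η) i := by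
    intro k
    have h1 : dotProduct (η : Fin d → ℝ) ((A k).mulVec ξ)
        = dotProduct (ξ : Fin d → ℝ) ((A k).mulVec η) := by
      rw [Matrix.dotProduct_mulVec, ← Matrix.mulVec_transpose, (hsymm k).eq,
        dotProduct_comm]
    simpa [dotProduct] using h1
  -- quadratic identity
  have hquad : ∀ k, qForm A b c0 k η - qForm A b c0 k ξ
      + ∑ i, qGrad A b k ξ i * (ξ i - η i)
      = (1/2) * ∑ i, (ξ i - η i) * ((A k).mulVec (fun i' => ξ i' - η i')) i := by
    intro k
    have hAδi : ∀ i, ((A k).mulVec (fun i' => ξ i' - η i')) i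
        = ((A k).mulVec ξ) i - ((A k).mulVec η) i := by
      intro i
      simp only [Matrix.mulVec, dotProduct, mul_sub]
      rw [Finset.sum_sub_distrib]
    have s1 : ∑ i, qGrad A b k ξ i * (ξ i - η i)
        = ((∑ i, ξ i * ((A k).mulVec ξ) i) - (∑ i, η i * ((A k).mulVec ξ) i))
          + ((∑ i, b k i * ξ i) - ∑ i, b k i * η i) := by
      rw [← Finset.sum_sub_distrib, ← Finset.sum_sub_distrib, ← Finset.sum_add_distrib]
      exact Finset.sum_congr rfl fun i _ => by simp only [qGrad]; ring
    have s2 : ∑ i, (ξ i - η i) * ((A k).mulVec (fun i' => ξ i' - η i')) i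
        = (∑ i, ξ i * ((A k).mulVec ξ) i) - (∑ i, ξ i * ((A k).mulVec η) i)
          - (∑ i, η i * ((A k).mulVec ξ) i) + ∑ i, η i * ((A k).mulVec η) i := by
      rw [← Finset.sum_sub_distrib, ← Finset.sum_sub_distrib, ← Finset.sum_add_distrib]
      exact Finset.sum_congr rfl fun i _ => by rw [hAδi i]; ring
    simp only [qForm, dotProduct]
    rw [s1, s2]
    have := hsym' k
    linarith
  -- the linear system data
  set u : Fin d → ℝ := fun i => ℓ i - h * (ξ i - η i) - ∑ j, cc j * qGrad A b j η i with hu_def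
  set w : Fin l → ℝ := fun k => h * (qForm A b c0 k η - qForm A b c0 k ξ)
    + (∑ i, ℓ i * qGrad A b k η i) + cc k with hw_def
  set v : Fin l → ℝ := fun k => w k - ∑ i, qGrad A b k ξ i * u i with hv_def
  set G : Matrix (Fin l) (Fin d) ℝ := Matrix.of (fun k i => qGrad A b k ξ i) with hG_def
  set M : Matrix (Fin l) (Fin l) ℝ := 1 + G * G.transpose with hM_def
  have hMpd : M.PosDef := by
    rw [hM_def]
    refine Matrix.PosDef.add_posSemidef Matrix.PosDef.one ?_
    have := Matrix.posSemidef_self_mul_conjTranspose G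
    simpa using this
  set cc' : Fin l → ℝ := (M⁻¹).mulVec v with hcc'_def
  have hMcc' : M.mulVec cc' = v := by
    rw [hcc'_def, Matrix.mulVec_mulVec, Matrix.mul_nonsing_inv _ hMpd.det_pos.ne'.isUnit,
      Matrix.one_mulVec]
  have hMk : ∀ k, cc' k + ∑ i, qGrad A b k ξ i * (∑ j, cc' j * qGrad A b j ξ i) = v k := by
    intro k
    have h0 := congrFun hMcc' k
    rw [hM_def, Matrix.add_mulVec, Matrix.one_mulVec, ← Matrix.mulVec_mulVec] at h0
    have h1 : (cc' + G.mulVec (G.transpose.mulVec cc')) k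
        = cc' k + ∑ i, qGrad A b k ξ i * (∑ j, cc' j * qGrad A b j ξ i) := by
      simp only [Pi.add_apply, Matrix.mulVec, dotProduct, Matrix.transpose_apply,
        hG_def, Matrix.of_apply]
      congr 1
      exact Finset.sum_congr rfl fun i _ => by
        congr 1
        exact Finset.sum_congr rfl fun j _ => mul_comm _ _
    rw [← h1]
    exact h0
  set ℓ' : Fin d → ℝ := fun i => u i + ∑ j, cc' j * qGrad A b j ξ i with hℓ'_def
  -- v identity
  have hveq : ∀ k, v k = h * ((1/2) * ∑ i, (ξ i - η i) * ((A k).mulVec (fun i' => ξ i' - η i')) i)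
      + (∑ i, ℓ i * (-((A k).mulVec (fun i' => ξ i' - η i')) i))
      + cc k + ∑ i, qGrad A b k ξ i * (∑ j, cc j * qGrad A b j η i) := by
    intro k
    have e1 : ∑ i, qGrad A b k ξ i * u i
        = (∑ i, ℓ i * qGrad A b k ξ i) - h * (∑ i, qGrad A b k ξ i * (ξ i - η i))
          - ∑ i, qGrad A b k ξ i * (∑ j, cc j * qGrad A b j η i) := by
      have e0 : ∀ i : Fin d, qGrad A b k ξ i * u i
          = ℓ i * qGrad A b k ξ i - h * (qGrad A b k ξ i * (ξ i - η i))
            - qGrad A b k ξ i * (∑ j, cc j * qGrad A b j η i) := fun i => by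
        simp only [hu_def]; ring
      rw [Finset.sum_congr rfl (fun i _ => e0 i), Finset.sum_sub_distrib,
        Finset.sum_sub_distrib, ← Finset.mul_sum]
    have e2 : ∑ i, ℓ i * (-((A k).mulVec (fun i' => ξ i' - η i')) i)
        = (∑ i, ℓ i * qGrad A b k η i) - ∑ i, ℓ i * qGrad A b k ξ i := by
      rw [← Finset.sum_sub_distrib]
      exact Finset.sum_congr rfl fun i _ => by rw [← hgdiff k i]; ring
    simp only [hv_def, hw_def]
    rw [e1, e2]
    linear_combination h * hquad k
  -- bounds
  have hρle : ∀ i, |ξ i - η i| ≤ ρ := fun i => le_trans (hδle i) (by linarith)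
  have tri : ∀ a b : ℝ, |a - b| ≤ |a| + |b| := fun a b => by
    simpa [sub_eq_add_neg, abs_neg] using abs_add_le a (-b)
  have hDrσ0 : (0:ℝ) ≤ D * (r⁻¹ * σ) :=
    mul_nonneg (by linarith) (mul_nonneg hrinv.le hσ0.le)
  have hDr20 : (0:ℝ) ≤ D * r⁻¹^2 := mul_nonneg (by linarith) (sq_nonneg _)
  have hZη : ∀ i, |∑ j, cc j * qGrad A b j η i| ≤ (l:ℝ) * (D * r⁻¹^2 * Kg) := by
    intro i
    calc |∑ j, cc j * qGrad A b j η i| ≤ ∑ j, |cc j * qGrad A b j η i| :=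
      Finset.abs_sum_le_sum_abs _ _
    _ ≤ ∑ _j : Fin l, D * r⁻¹^2 * Kg := Finset.sum_le_sum fun j _ => by
        rw [abs_mul]
        exact mul_le_mul (hcc j) (hgη j i) (abs_nonneg _) hDr20
    _ = (l:ℝ) * (D * r⁻¹^2 * Kg) := by simp [Finset.sum_const, Finset.card_univ]
  have hv_bound : ∀ k, |v k| ≤ C1 * (D * r⁻¹^2) := by
    intro k
    rw [hveq k]
    have hS : |∑ i, (ξ i - η i) * ((A k).mulVec (fun i' => ξ i' - η i')) i|
        ≤ (d:ℝ)^2 * Ka * ρ^2 := by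
      calc |∑ i, (ξ i - η i) * ((A k).mulVec (fun i' => ξ i' - η i')) i|
          ≤ ∑ i, |(ξ i - η i) * ((A k).mulVec (fun i' => ξ i' - η i')) i| :=
        Finset.abs_sum_le_sum_abs _ _
      _ ≤ ∑ _i : Fin d, ρ * ((d:ℝ) * Ka * ρ) := Finset.sum_le_sum fun i _ => by
          rw [abs_mul]
          exact mul_le_mul (hρle i) (hAδ k i) (abs_nonneg _) hρ0.le
      _ = (d:ℝ) * (ρ * ((d:ℝ) * Ka * ρ)) := by simp [Finset.sum_const, Finset.card_univ]
      _ = (d:ℝ)^2 * Ka * ρ^2 := by ring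
    have hd2Ka0 : (0:ℝ) ≤ (d:ℝ)^2 * Ka := mul_nonneg (sq_nonneg _) hKa0
    have hT1 : |h * ((1/2) * ∑ i, (ξ i - η i) * ((A k).mulVec (fun i' => ξ i' - η i')) i)|
        ≤ (d:ℝ)^2 * Ka * (D * r⁻¹^2) := by
      rw [abs_mul, abs_mul]
      have h12 : |(1:ℝ)/2| = 1/2 := by norm_num
      rw [h12]
      calc |h| * (1/2 * |∑ i, (ξ i - η i) * ((A k).mulVec (fun i' => ξ i' - η i')) i|)
          ≤ σ^2 * (1/2 * ((d:ℝ)^2 * Ka * ρ^2)) := by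
            exact mul_le_mul hh (mul_le_mul_of_nonneg_left hS (by norm_num))
              (mul_nonneg (by norm_num) (abs_nonneg _)) (sq_nonneg σ)
      _ = (1/2) * ((d:ℝ)^2 * Ka) * (σ^2 * ρ^2) := by ring
      _ = (1/2) * ((d:ℝ)^2 * Ka) * r⁻¹^2 := by rw [hσρ2]
      _ ≤ (d:ℝ)^2 * Ka * (D * r⁻¹^2) := by
          have e : (d:ℝ)^2 * Ka * (D * r⁻¹^2) - (1/2) * ((d:ℝ)^2 * Ka) * r⁻¹^2
              = ((d:ℝ)^2 * Ka * r⁻¹^2) * (D - 1/2) := by ring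
          have e2 : (0:ℝ) ≤ ((d:ℝ)^2 * Ka * r⁻¹^2) * (D - 1/2) :=
            mul_nonneg (mul_nonneg hd2Ka0 (sq_nonneg r⁻¹)) (by linarith)
          linarith
    have hT2 : |∑ i, ℓ i * (-((A k).mulVec (fun i' => ξ i' - η i')) i)|
        ≤ (d:ℝ)^2 * Ka * (D * r⁻¹^2) := by
      have hdKaρ0 : (0:ℝ) ≤ (d:ℝ) * Ka * ρ := by positivity
      calc |∑ i, ℓ i * (-((A k).mulVec (fun i' => ξ i' - η i')) i)|
          ≤ ∑ i, |ℓ i * (-((A k).mulVec (fun i' => ξ i' - η i')) i)| :=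
        Finset.abs_sum_le_sum_abs _ _
      _ ≤ ∑ _i : Fin d, (D * r⁻¹ * σ) * ((d:ℝ) * Ka * ρ) := Finset.sum_le_sum fun i _ => by
          rw [abs_mul, abs_neg]
          exact mul_le_mul (hℓ i) (hAδ k i) (abs_nonneg _)
            (mul_nonneg (mul_nonneg (by linarith) hrinv.le) hσ0.le)
      _ = (d:ℝ) * ((D * r⁻¹ * σ) * ((d:ℝ) * Ka * ρ)) := by
          simp [Finset.sum_const, Finset.card_univ]
      _ = (d:ℝ)^2 * Ka * D * (r⁻¹ * (σ * ρ)) := by ring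
      _ = (d:ℝ)^2 * Ka * D * (r⁻¹ * r⁻¹) := by rw [hσρ1]
      _ = (d:ℝ)^2 * Ka * (D * r⁻¹^2) := by ring
    have hT3 : |cc k| ≤ D * r⁻¹^2 := hcc k
    have hT4 : |∑ i, qGrad A b k ξ i * (∑ j, cc j * qGrad A b j η i)|
        ≤ (d:ℝ) * (l:ℝ) * Kg^2 * (D * r⁻¹^2) := by
      calc |∑ i, qGrad A b k ξ i * (∑ j, cc j * qGrad A b j η i)|
          ≤ ∑ i, |qGrad A b k ξ i * (∑ j, cc j * qGrad A b j η i)| :=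
        Finset.abs_sum_le_sum_abs _ _
      _ ≤ ∑ _i : Fin d, Kg * ((l:ℝ) * (D * r⁻¹^2 * Kg)) := Finset.sum_le_sum fun i _ => by
          rw [abs_mul]
          exact mul_le_mul (hgξ k i) (hZη i) (abs_nonneg _) hKg0
      _ = (d:ℝ) * (Kg * ((l:ℝ) * (D * r⁻¹^2 * Kg))) := by
          simp [Finset.sum_const, Finset.card_univ]
      _ = (d:ℝ) * (l:ℝ) * Kg^2 * (D * r⁻¹^2) := by ring
    have habs : |h * ((1/2) * ∑ i, (ξ i - η i) * ((A k).mulVec (fun i' => ξ i' - η i')) i)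
        + (∑ i, ℓ i * (-((A k).mulVec (fun i' => ξ i' - η i')) i))
        + cc k + ∑ i, qGrad A b k ξ i * (∑ j, cc j * qGrad A b j η i)|
        ≤ |h * ((1/2) * ∑ i, (ξ i - η i) * ((A k).mulVec (fun i' => ξ i' - η i')) i)|
        + |∑ i, ℓ i * (-((A k).mulVec (fun i' => ξ i' - η i')) i)|
        + |cc k| + |∑ i, qGrad A b k ξ i * (∑ j, cc j * qGrad A b j η i)| := by
      calc _ ≤ |h * ((1/2) * ∑ i, (ξ i - η i) * ((A k).mulVec (fun i' => ξ i' - η i')) i)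
          + (∑ i, ℓ i * (-((A k).mulVec (fun i' => ξ i' - η i')) i)) + cc k|
          + |∑ i, qGrad A b k ξ i * (∑ j, cc j * qGrad A b j η i)| := abs_add_le _ _
      _ ≤ _ := by
          have h1 := abs_add_le (h * ((1/2) * ∑ i, (ξ i - η i) *
            ((A k).mulVec (fun i' => ξ i' - η i')) i)
            + (∑ i, ℓ i * (-((A k).mulVec (fun i' => ξ i' - η i')) i))) (cc k)
          have h2 := abs_add_le (h * ((1/2) * ∑ i, (ξ i - η i) *
            ((A k).mulVec (fun i' => ξ i' - η i')) i))
            (∑ i, ℓ i * (-((A k).mulVec (fun i' => ξ i' - η i')) i))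
          linarith
    calc _ ≤ _ := habs
    _ ≤ (d:ℝ)^2 * Ka * (D * r⁻¹^2) + (d:ℝ)^2 * Ka * (D * r⁻¹^2) + D * r⁻¹^2
        + (d:ℝ) * (l:ℝ) * Kg^2 * (D * r⁻¹^2) := by linarith
    _ = C1 * (D * r⁻¹^2) := by rw [hC1_def]; ring
  have hcc'_bound : ∀ j, |cc' j| ≤ C2 * (D * r⁻¹^2) := by
    have hB0 : (0:ℝ) ≤ C1 * (D * r⁻¹^2) := mul_nonneg (by linarith) hDr20
    have hvsq : ∀ k, v k^2 ≤ (C1 * (D * r⁻¹^2))^2 := by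
      intro k
      have h1 := pow_le_pow_left₀ (abs_nonneg (v k)) (hv_bound k) 2
      rwa [sq_abs] at h1
    have hT : ∑ k, v k^2 ≤ (l:ℝ) * (C1 * (D * r⁻¹^2))^2 := by
      calc ∑ k, v k^2 ≤ ∑ _k : Fin l, (C1 * (D * r⁻¹^2))^2 :=
        Finset.sum_le_sum fun k _ => hvsq k
      _ = (l:ℝ) * (C1 * (D * r⁻¹^2))^2 := by simp [Finset.sum_const, Finset.card_univ]
    have step : ∀ k, cc' k * v k
        = cc' k^2 + ∑ i, (cc' k * qGrad A b k ξ i) * (∑ j, cc' j * qGrad A b j ξ i) := by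
      intro k
      rw [← hMk k, mul_add, Finset.mul_sum]
      congr 1
      · exact (pow_two _).symm
      · exact Finset.sum_congr rfl fun i _ => (mul_assoc _ _ _).symm
    have hSv : ∑ k, cc' k * v k
        = (∑ k, cc' k^2) + ∑ i, (∑ k, cc' k * qGrad A b k ξ i)^2 := by
      rw [Finset.sum_congr rfl (fun k _ => step k), Finset.sum_add_distrib]
      congr 1
      rw [Finset.sum_comm]
      exact Finset.sum_congr rfl fun i _ => by rw [← Finset.sum_mul, ← pow_two]
    have hS0 : (0:ℝ) ≤ ∑ k, cc' k^2 := Finset.sum_nonneg fun _ _ => sq_nonneg _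
    have hQ0 : (0:ℝ) ≤ ∑ i, (∑ k, cc' k * qGrad A b k ξ i)^2 :=
      Finset.sum_nonneg fun _ _ => sq_nonneg _
    have hSle : (∑ k, cc' k^2) ≤ ∑ k, cc' k * v k := by rw [hSv]; linarith
    have hCS := Finset.sum_mul_sq_le_sq_mul_sq Finset.univ cc' v
    have hT0 : (0:ℝ) ≤ ∑ k, v k^2 := Finset.sum_nonneg fun _ _ => sq_nonneg _
    have hS_T : (∑ k, cc' k^2) ≤ ∑ k, v k^2 := by
      rcases eq_or_lt_of_le hS0 with h0 | h0
      · linarith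
      · have h1 : (∑ k, cc' k^2) * (∑ k, cc' k^2) ≤ (∑ k, cc' k * v k) * (∑ k, cc' k * v k) :=
          mul_self_le_mul_self hS0 hSle
        have h2 : (∑ k, cc' k * v k) * (∑ k, cc' k * v k)
            ≤ (∑ k, cc' k^2) * (∑ k, v k^2) := by
          have := hCS
          calc (∑ k, cc' k * v k) * (∑ k, cc' k * v k) = (∑ k, cc' k * v k)^2 := (pow_two _).symm
          _ ≤ (∑ k, cc' k^2) * (∑ k, v k^2) := hCS
        have h3 : (∑ k, cc' k^2) * (∑ k, cc' k^2) ≤ (∑ k, cc' k^2) * (∑ k, v k^2) :=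
          le_trans h1 h2
        exact le_of_mul_le_mul_left h3 h0
    intro j
    have hj : cc' j^2 ≤ ∑ k, cc' k^2 :=
      Finset.single_le_sum (f := fun k => cc' k^2) (fun _ _ => sq_nonneg _) (Finset.mem_univ j)
    have hlsq : (l:ℝ) ≤ ((l:ℝ)+1)^2 := by
      have := sq_nonneg (l:ℝ)
      have e : ((l:ℝ)+1)^2 = (l:ℝ)^2 + 2*(l:ℝ) + 1 := by ring
      linarith
    have hfin : cc' j^2 ≤ (((l:ℝ)+1) * (C1 * (D * r⁻¹^2)))^2 := by
      have h5 : (l:ℝ) * (C1 * (D * r⁻¹^2))^2 ≤ ((l:ℝ)+1)^2 * (C1 * (D * r⁻¹^2))^2 :=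
        mul_le_mul_of_nonneg_right hlsq (sq_nonneg _)
      calc cc' j^2 ≤ (l:ℝ) * (C1 * (D * r⁻¹^2))^2 := by linarith
      _ ≤ ((l:ℝ)+1)^2 * (C1 * (D * r⁻¹^2))^2 := h5
      _ = (((l:ℝ)+1) * (C1 * (D * r⁻¹^2)))^2 := by ring
    have hM0 : (0:ℝ) ≤ ((l:ℝ)+1) * (C1 * (D * r⁻¹^2)) :=
      mul_nonneg (by linarith) hB0
    have : |cc' j| ≤ ((l:ℝ)+1) * (C1 * (D * r⁻¹^2)) := by
      have h9 := Real.sqrt_le_sqrt hfin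
      rwa [Real.sqrt_sq_eq_abs, Real.sqrt_sq hM0] at h9
    calc |cc' j| ≤ ((l:ℝ)+1) * (C1 * (D * r⁻¹^2)) := this
    _ = C2 * (D * r⁻¹^2) := by rw [hC2_def]; ring
  have hu_bound : ∀ i, |u i| ≤ (2 + (l:ℝ)*Kg) * (D * (r⁻¹*σ)) := by
    intro i
    have h1 : |u i| ≤ |ℓ i| + |h * (ξ i - η i)| + |∑ j, cc j * qGrad A b j η i| := by
      simp only [hu_def]
      calc |ℓ i - h * (ξ i - η i) - ∑ j, cc j * qGrad A b j η i|
          ≤ |ℓ i - h * (ξ i - η i)| + |∑ j, cc j * qGrad A b j η i| := tri _ _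
      _ ≤ |ℓ i| + |h * (ξ i - η i)| + |∑ j, cc j * qGrad A b j η i| := by
          linarith [tri (ℓ i) (h * (ξ i - η i))]
    have h2 : |h * (ξ i - η i)| ≤ r⁻¹ * σ := by
      rw [abs_mul]
      calc |h| * |ξ i - η i| ≤ σ^2 * ρ :=
        mul_le_mul hh (hρle i) (abs_nonneg _) (sq_nonneg σ)
      _ = r⁻¹ * σ := hσ2ρ
    have h3 := hZη i
    have h4 : (l:ℝ) * (D * r⁻¹^2 * Kg) ≤ (l:ℝ) * Kg * (D * (r⁻¹ * σ)) := by
      have h5 : D * r⁻¹^2 * Kg ≤ D * (r⁻¹ * σ) * Kg := by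
        apply mul_le_mul_of_nonneg_right _ hKg0
        apply mul_le_mul_of_nonneg_left hr2le (by linarith)
      calc (l:ℝ) * (D * r⁻¹^2 * Kg) ≤ (l:ℝ) * (D * (r⁻¹ * σ) * Kg) :=
        mul_le_mul_of_nonneg_left h5 hl0
      _ = (l:ℝ) * Kg * (D * (r⁻¹ * σ)) := by ring
    have h6 : r⁻¹ * σ ≤ D * (r⁻¹ * σ) := by
      have e2 : (0:ℝ) ≤ (r⁻¹ * σ) * (D - 1) :=
        mul_nonneg (mul_nonneg hrinv.le hσ0.le) (by linarith)
      have e : D * (r⁻¹ * σ) - r⁻¹ * σ = (r⁻¹ * σ) * (D - 1) := by ring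
      linarith
    have h7 := hℓ i
    have h8 : D * r⁻¹ * σ = D * (r⁻¹ * σ) := by ring
    rw [h8] at h7
    calc |u i| ≤ |ℓ i| + |h * (ξ i - η i)| + |∑ j, cc j * qGrad A b j η i| := h1
    _ ≤ D * (r⁻¹ * σ) + D * (r⁻¹ * σ) + (l:ℝ) * Kg * (D * (r⁻¹ * σ)) := by linarith
    _ = (2 + (l:ℝ)*Kg) * (D * (r⁻¹*σ)) := by ring
  have hℓ'_bound : ∀ i, |ℓ' i| ≤ C3 * (D * (r⁻¹*σ)) := by
    intro i
    have h1 : |ℓ' i| ≤ |u i| + |∑ j, cc' j * qGrad A b j ξ i| := by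
      simp only [hℓ'_def]
      exact abs_add_le _ _
    have h2 : |∑ j, cc' j * qGrad A b j ξ i| ≤ (l:ℝ) * (C2 * (D * r⁻¹^2) * Kg) := by
      calc |∑ j, cc' j * qGrad A b j ξ i| ≤ ∑ j, |cc' j * qGrad A b j ξ i| :=
        Finset.abs_sum_le_sum_abs _ _
      _ ≤ ∑ _j : Fin l, C2 * (D * r⁻¹^2) * Kg := Finset.sum_le_sum fun j _ => by
          rw [abs_mul]
          exact mul_le_mul (hcc'_bound j) (hgξ j i) (abs_nonneg _)
            (mul_nonneg (by linarith) hDr20)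
      _ = (l:ℝ) * (C2 * (D * r⁻¹^2) * Kg) := by simp [Finset.sum_const, Finset.card_univ]
    have h3 : (l:ℝ) * (C2 * (D * r⁻¹^2) * Kg) ≤ (l:ℝ) * Kg * C2 * (D * (r⁻¹ * σ)) := by
      have h4 : D * r⁻¹^2 ≤ D * (r⁻¹ * σ) := mul_le_mul_of_nonneg_left hr2le (by linarith)
      have h5 : C2 * (D * r⁻¹^2) * Kg ≤ C2 * (D * (r⁻¹ * σ)) * Kg := by
        apply mul_le_mul_of_nonneg_right _ hKg0
        exact mul_le_mul_of_nonneg_left h4 (by linarith)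
      calc (l:ℝ) * (C2 * (D * r⁻¹^2) * Kg) ≤ (l:ℝ) * (C2 * (D * (r⁻¹ * σ)) * Kg) :=
        mul_le_mul_of_nonneg_left h5 hl0
      _ = (l:ℝ) * Kg * C2 * (D * (r⁻¹ * σ)) := by ring
    have h6 := hu_bound i
    calc |ℓ' i| ≤ |u i| + |∑ j, cc' j * qGrad A b j ξ i| := h1
    _ ≤ (2 + (l:ℝ)*Kg) * (D * (r⁻¹*σ)) + (l:ℝ) * Kg * C2 * (D * (r⁻¹ * σ)) := by linarith
    _ = C3 * (D * (r⁻¹*σ)) := by rw [hC3_def]; ring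
  refine ⟨ξ, hlat, ?_, ℓ', cc', ?_, ?_, ?_⟩
  · -- norm bound
    have hsub : ∀ i, (ξ - η) i = ξ i - η i := fun i => rfl
    have hsum : (∑ i, ‖(ξ - η) i‖^2) ≤ ((d:ℝ)*ρ)^2 := by
      have hterm : ∀ i : Fin d, ‖(ξ - η) i‖^2 ≤ ρ^2 := by
        intro i
        rw [hsub i, Real.norm_eq_abs]
        exact pow_le_pow_left₀ (abs_nonneg _) (hρle i) 2
      have hdd : (d:ℝ) * ρ^2 ≤ ((d:ℝ)*ρ)^2 := by
        rcases Nat.eq_zero_or_pos d with hd | hd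
        · subst hd; simp
        · have hd1 : (1:ℝ) ≤ (d:ℝ) := by exact_mod_cast hd
          have e : ((d:ℝ)*ρ)^2 - (d:ℝ)*ρ^2 = ((d:ℝ)*ρ^2)*((d:ℝ)-1) := by ring
          have e2 : (0:ℝ) ≤ ((d:ℝ)*ρ^2)*((d:ℝ)-1) :=
            mul_nonneg (mul_nonneg hd0 (sq_nonneg ρ)) (by linarith)
          linarith
      calc (∑ i, ‖(ξ - η) i‖^2) ≤ ∑ _i : Fin d, ρ^2 := Finset.sum_le_sum fun i _ => hterm i
      _ = (d:ℝ) * ρ^2 := by simp [Finset.sum_const, Finset.card_univ]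
      _ ≤ ((d:ℝ)*ρ)^2 := hdd
    have hn : ‖ξ - η‖ ≤ (d:ℝ) * ρ := by
      rw [EuclideanSpace.norm_eq]
      calc Real.sqrt (∑ i, ‖(ξ - η) i‖^2) ≤ Real.sqrt (((d:ℝ)*ρ)^2) :=
        Real.sqrt_le_sqrt hsum
      _ = (d:ℝ) * ρ := Real.sqrt_sq (mul_nonneg hd0 hρ0.le)
    calc ‖ξ - η‖ ≤ (d:ℝ) * ρ := hn
    _ ≤ (C3 + C2 + (d:ℝ) + 1) * ρ := by
        have e : (C3 + C2 + (d:ℝ) + 1) * ρ = (d:ℝ) * ρ + (C3 + C2 + 1) * ρ := by ring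
        have e2 : (0:ℝ) ≤ (C3 + C2 + 1) * ρ :=
          mul_nonneg (by linarith) hρ0.le
        linarith
    _ = (C3 + C2 + (d:ℝ) + 1) * r⁻¹ * σ⁻¹ := by rw [hρ_def]; ring
  · -- ℓ' bound
    intro i
    have h1 := hℓ'_bound i
    have h2 : C3 * (D * (r⁻¹*σ)) ≤ (C3 + C2 + (d:ℝ) + 1) * (D * (r⁻¹ * σ)) := by
      have e : (C3 + C2 + (d:ℝ) + 1) * (D * (r⁻¹ * σ))
          = C3 * (D * (r⁻¹*σ)) + (C2 + (d:ℝ) + 1) * (D * (r⁻¹ * σ)) := by ring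
      have e2 : (0:ℝ) ≤ (C2 + (d:ℝ) + 1) * (D * (r⁻¹ * σ)) :=
        mul_nonneg (by linarith) hDrσ0
      linarith
    calc |ℓ' i| ≤ C3 * (D * (r⁻¹*σ)) := h1
    _ ≤ (C3 + C2 + (d:ℝ) + 1) * (D * (r⁻¹ * σ)) := h2
    _ = (C3 + C2 + (d:ℝ) + 1) * D * r⁻¹ * σ := by ring
  · -- cc' bound
    intro j
    have h1 := hcc'_bound j
    have h2 : C2 * (D * r⁻¹^2) ≤ (C3 + C2 + (d:ℝ) + 1) * (D * r⁻¹^2) := by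
      have e : (C3 + C2 + (d:ℝ) + 1) * (D * r⁻¹^2)
          = C2 * (D * r⁻¹^2) + (C3 + (d:ℝ) + 1) * (D * r⁻¹^2) := by ring
      have e2 : (0:ℝ) ≤ (C3 + (d:ℝ) + 1) * (D * r⁻¹^2) :=
        mul_nonneg (by linarith) hDr20
      linarith
    calc |cc' j| ≤ C2 * (D * r⁻¹^2) := h1
    _ ≤ (C3 + C2 + (d:ℝ) + 1) * (D * r⁻¹^2) := h2
    _ = (C3 + C2 + (d:ℝ) + 1) * D * r⁻¹^2 := by ring
  · -- the representation identity
    rw [hω]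
    ext x
    rcases x with i | k | pu
    · simp only [ConeSpace.add_apply', ConeSpace.sum_apply', ConeSpace.smul_apply',
        cVec, tVec, nVec]
      simp only [mul_ite, mul_one, mul_zero, Finset.sum_ite_eq, Finset.sum_ite_eq',
        Finset.mem_univ, if_true, mul_neg, Finset.sum_neg_distrib]
      simp only [hℓ'_def, hu_def]
      ring
    · simp only [ConeSpace.add_apply', ConeSpace.sum_apply', ConeSpace.smul_apply',
        cVec, tVec, nVec]
      simp only [mul_ite, mul_one, mul_zero, Finset.sum_ite_eq, Finset.sum_ite_eq',
        Finset.mem_univ, if_true]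
      have split : ∑ i, ℓ' i * qGrad A b k ξ i
          = (∑ i, qGrad A b k ξ i * u i)
            + ∑ i, qGrad A b k ξ i * (∑ j, cc' j * qGrad A b j ξ i) := by
        rw [← Finset.sum_add_distrib]
        exact Finset.sum_congr rfl fun i _ => by simp only [hℓ'_def]; ring
      rw [split]
      have hMk' := hMk k
      simp only [hv_def, hw_def] at hMk'
      linear_combination -hMk'
    · simp only [ConeSpace.add_apply', ConeSpace.sum_apply', ConeSpace.smul_apply',
        cVec, tVec, nVec]
      simp [mul_zero, mul_one, Finset.sum_const_zero]


end
end
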